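/- arXiv:1603.07201 — 7 statements merged into one kernel-verified Lean document; each statement's English description precedes it below -/
import Mathlib

section
/- Let ρ = (ρ_J : J ⊆ I) be a probability vector on nonempty subsets of a finite set I, 𝒥_ρ = {J : ρ_J > 0} its support, and 𝒟^ρ the partition of I generated by 𝒥_ρ. If M ⊆ L for some atom L of 𝒟^ρ, then the recombination operator preserves the marginal on M: Ξ[μ]_M = μ_M, where Ξ[μ] = ∑_{J} ρ_J μ_J ⊗ μ_{J^c}. -/
open scoped Classical
open Finset

universe u

section Meas
variable {I : Type u} [Fintype I] [DecidableEq I]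
variable {A : I → Type*} [∀ i, Fintype (A i)] [∀ i, DecidableEq (A i)]

/-- The marginal of `μ` on the coordinate set `J`, viewed as a function of the full
configuration that only depends on the coordinates in `J`. -/
noncomputable def marginal (μ : (∀ i, A i) → ℝ) (J : Finset I) : (∀ i, A i) → ℝ :=
  fun x => ∑ y : ∀ i, A i, if ∀ i ∈ J, y i = x i then μ y else 0

def IsProbMeasure (μ : (∀ i, A i) → ℝ) : Prop :=
  (∀ x, 0 ≤ μ x) ∧ ∑ x : ∀ i, A i, μ x = 1

/-- `ν` is (induced by) a probability measure on the coordinates in `L`: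
it depends only on the coordinates in `L`, is nonnegative, and its total mass,
summed over the `L`-coordinates (the off-`L` coordinates being frozen), is `1`. -/
def IsProbOn (L : Finset I) (ν : (∀ i, A i) → ℝ) : Prop :=
  (∀ x y : ∀ i, A i, (∀ i ∈ L, x i = y i) → ν x = ν y) ∧ (∀ x, 0 ≤ ν x) ∧
  (∀ x₀ : ∀ i, A i, ∑ y : ∀ i, A i, (if ∀ i, i ∉ L → y i = x₀ i then ν y else 0) = 1)

/-- The recombination transformation `Ξ[μ] = ∑_J ρ_J μ_J ⊗ μ_{Jᶜ}`. -/
noncomputable def Xi (ρ : Finset I → ℝ) (μ : (∀ i, A i) → ℝ) : (∀ i, A i) → ℝ :=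
  fun x => ∑ J : Finset I, ρ J * (marginal μ J x * marginal μ Jᶜ x)

end Meas

section Comb
variable {I : Type u} [Fintype I] [DecidableEq I]

/-- `ρ` is a probability vector on nonempty subsets of `I`. -/
def IsProbVec (ρ : Finset I → ℝ) : Prop :=
  ρ ∅ = 0 ∧ (∀ J, 0 ≤ ρ J) ∧ ∑ J : Finset I, ρ J = 1

end Comb

/-- `𝒴(𝒥_ρ)`: the closure of the support of `ρ` under nonempty intersections. -/
inductive inY {I : Type u} [Fintype I] [DecidableEq I] (ρ : Finset I → ℝ) : Finset I → Prop
  | base (J : Finset I) : 0 < ρ J → inY ρ J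
  | inter (K J : Finset I) : inY ρ K → 0 < ρ J → (K ∩ J).Nonempty → inY ρ (K ∩ J)

section Comb2
variable {I : Type u} [Fintype I] [DecidableEq I]

/-- `L` is an atom of the partition `𝒟^ρ` generated by the support of `ρ`. -/
def isAtomD (ρ : Finset I → ℝ) (L : Finset I) : Prop :=
  inY ρ L ∧ ∀ J : Finset I, 0 < ρ J → (J ∩ L = L ∨ J ∩ L = ∅)

/-- The coefficients `ρ^K_M` of Definition 2.2:
`ρ^K_M = ∑_{J ∈ 𝒥_ρ, J∩K = M} ρ_J` for `M ≠ K`, and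
`ρ^K_K = ∑_{J ∈ 𝒥_ρ, J∩K = K ∨ J∩K = ∅} ρ_J`. -/
noncomputable def rhoC (ρ : Finset I → ℝ) (K M : Finset I) : ℝ :=
  if M = K then
    ∑ J ∈ univ.filter (fun J : Finset I => 0 < ρ J ∧ (J ∩ K = K ∨ J ∩ K = ∅)), ρ J
  else
    ∑ J ∈ univ.filter (fun J : Finset I => 0 < ρ J ∧ J ∩ K = M), ρ J

/-- A finite-set partition of `I`. -/
def IsPartitionF (𝒟 : Finset (Finset I)) : Prop :=
  (∀ L ∈ 𝒟, L.Nonempty) ∧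
  (∀ L ∈ 𝒟, ∀ L' ∈ 𝒟, L ≠ L' → L ∩ L' = ∅) ∧
  𝒟.biUnion id = Finset.univ

end Comb2

lemma key_marginal {I : Type u} [Fintype I] [DecidableEq I]
    {A : I → Type*} [∀ i, Fintype (A i)] [∀ i, DecidableEq (A i)]
    (μ : (∀ i, A i) → ℝ) (hμ1 : ∑ x : ∀ i, A i, μ x = 1)
    (J M : Finset I) (hMJ : M ⊆ J) (x : ∀ i, A i) :
    ∑ y : ∀ i, A i, (if ∀ i ∈ M, y i = x i then marginal μ J y * marginal μ Jᶜ y else 0)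
      = marginal μ M x := by
  unfold marginal
  have step1 : ∀ y : ∀ i, A i,
      (if ∀ i ∈ M, y i = x i then
        (∑ z : ∀ i, A i, if ∀ i ∈ J, z i = y i then μ z else 0) *
        (∑ w : ∀ i, A i, if ∀ i ∈ Jᶜ, w i = y i then μ w else 0) else 0)
      = ∑ z : ∀ i, A i, ∑ w : ∀ i, A i,
          if (∀ i ∈ M, y i = x i) ∧ (∀ i ∈ J, z i = y i) ∧ (∀ i ∈ Jᶜ, w i = y i)
          then μ z * μ w else 0 := by
    intro y
    rw [Finset.sum_mul_sum]
    split_ifs with hc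
    · refine Finset.sum_congr rfl fun z _ => Finset.sum_congr rfl fun w _ => ?_
      split_ifs <;> simp_all [Finset.mem_compl]
    · simp only [hc, false_and, if_false]
      simp
  simp only [step1]
  rw [Finset.sum_comm]
  have step2 : ∀ z : ∀ i, A i,
      (∑ y : ∀ i, A i, ∑ w : ∀ i, A i,
        if (∀ i ∈ M, y i = x i) ∧ (∀ i ∈ J, z i = y i) ∧ (∀ i ∈ Jᶜ, w i = y i)
        then μ z * μ w else 0)
      = ∑ w : ∀ i, A i, if ∀ i ∈ M, z i = x i then μ z * μ w else 0 := by
    intro z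
    rw [Finset.sum_comm]
    refine Finset.sum_congr rfl fun w _ => ?_
    have huniq : ∀ y : ∀ i, A i,
        ((∀ i ∈ M, y i = x i) ∧ (∀ i ∈ J, z i = y i) ∧ (∀ i ∈ Jᶜ, w i = y i))
        ↔ (y = fun i => if i ∈ J then z i else w i) ∧ (∀ i ∈ M, z i = x i) := by
      intro y
      constructor
      · rintro ⟨h1, h2, h3⟩
        constructor
        · funext i
          by_cases hi : i ∈ J
          · simp [hi, (h2 i hi).symm]
          · simp [hi, (h3 i (Finset.mem_compl.2 hi)).symm]
        · intro i hi; rw [h2 i (hMJ hi)]; exact h1 i hi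
      · rintro ⟨rfl, h1⟩
        refine ⟨fun i hi => ?_, fun i hi => ?_, fun i hi => ?_⟩
        · simp only [hMJ hi, if_pos]; exact h1 i hi
        · simp [hi]
        · simp [Finset.mem_compl.1 hi]
    simp only [huniq]
    have : ∀ y : ∀ i, A i,
        (if (y = fun i => if i ∈ J then z i else w i) ∧ (∀ i ∈ M, z i = x i)
         then μ z * μ w else 0)
        = if y = (fun i => if i ∈ J then z i else w i) then
            (if ∀ i ∈ M, z i = x i then μ z * μ w else 0) else 0 := by
      intro y; by_cases h : y = fun i => if i ∈ J then z i else w i <;> simp [h]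
    simp only [this]
    rw [Finset.sum_ite_eq' Finset.univ]
    simp
  simp only [step2]
  have : ∀ z : ∀ i, A i,
      (∑ w : ∀ i, A i, if ∀ i ∈ M, z i = x i then μ z * μ w else 0)
      = (if ∀ i ∈ M, z i = x i then μ z else 0) := by
    intro z
    split_ifs with h
    · rw [← Finset.mul_sum, hμ1, mul_one]
    · simp [h]
  simp only [this]

/-- if `M` is contained in an atom of `𝒟^ρ`, then `Ξ[μ]_M = μ_M`. -/
theorem Xi_preserves_atom_marginal {I : Type u} [Fintype I] [DecidableEq I]
    {A : I → Type*} [∀ i, Fintype (A i)] [∀ i, DecidableEq (A i)]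
    (ρ : Finset I → ℝ) (hρ : IsProbVec ρ)
    (μ : (∀ i, A i) → ℝ) (hμ : IsProbMeasure μ)
    (L M : Finset I) (hL : isAtomD ρ L) (hML : M ⊆ L) :
    marginal (Xi ρ μ) M = marginal μ M := by
  funext x
  unfold marginal Xi
  have expand : ∀ y : ∀ i, A i,
      (if ∀ i ∈ M, y i = x i then
        ∑ J : Finset I, ρ J * (marginal μ J y * marginal μ Jᶜ y) else 0)
      = ∑ J : Finset I, ρ J *
          (if ∀ i ∈ M, y i = x i then marginal μ J y * marginal μ Jᶜ y else 0) := by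
    intro y; split_ifs with h <;> simp
  simp only [expand]
  rw [Finset.sum_comm]
  have hterm : ∀ J : Finset I,
      (∑ y : ∀ i, A i, ρ J *
        (if ∀ i ∈ M, y i = x i then marginal μ J y * marginal μ Jᶜ y else 0))
      = ρ J * marginal μ M x := by
    intro J
    rw [← Finset.mul_sum]
    rcases eq_or_lt_of_le (hρ.2.1 J) with h0 | hpos
    · rw [← h0]; ring
    · congr 1
      rcases hL.2 J hpos with hJL | hJL
      · exact key_marginal μ hμ.2 J M (hML.trans (Finset.inter_eq_right.1 hJL)) x
      · have hMJc : M ⊆ Jᶜ := by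
          intro i hi
          rw [Finset.mem_compl]
          intro hiJ
          have : i ∈ J ∩ L := Finset.mem_inter.2 ⟨hiJ, hML hi⟩
          rw [hJL] at this
          exact absurd this (Finset.notMem_empty i)
        have := key_marginal μ hμ.2 Jᶜ M hMJc x
        rw [compl_compl] at this
        rw [← this]
        refine Finset.sum_congr rfl fun y _ => ?_
        split_ifs with h
        · ring
        · rfl
  simp only [hterm]
  rw [← Finset.sum_mul, hρ.2.2, one_mul]
  rfl
end

section
/- Let 𝒟 be a partition of I finer than 𝒟^ρ and for each atom L ∈ 𝒟 let μ^L be a probability measure on ∏_{i∈L} A_i. Then μ = ⊗_{L∈𝒟} μ^L is a fixed point of the recombination operator: Ξ[μ] = μ. -/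
open scoped Classical
open Finset

universe u

section Meas
variable {I : Type u} [Fintype I] [DecidableEq I]
variable {A : I → Type*} [∀ i, Fintype (A i)] [∀ i, DecidableEq (A i)]

section Aux
variable {I : Type u} [Fintype I] [DecidableEq I]
variable {A : I → Type*} [∀ i, Fintype (A i)] [∀ i, DecidableEq (A i)]

lemma keySum (ν : Finset I → (∀ i, A i) → ℝ) :
    ∀ (S : Finset (Finset I)),
    (∀ L ∈ S, ∀ L' ∈ S, L ≠ L' → L ∩ L' = ∅) →
    (∀ L ∈ S, IsProbOn L (ν L)) → ∀ x : ∀ i, A i,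
    ∑ y : ∀ i, A i,
      (if ∀ i, i ∉ S.biUnion id → y i = x i then ∏ L ∈ S, ν L y else 0) = 1 := by
  intro S
  induction S using Finset.induction_on with
  | empty =>
    intro _ _ x
    have h1 : ∀ y : ∀ i, A i,
        (if ∀ i, i ∉ (∅ : Finset (Finset I)).biUnion id → y i = x i
          then ∏ L ∈ (∅ : Finset (Finset I)), ν L y else 0)
        = if y = x then 1 else 0 := by
      intro y
      simp [funext_iff]
    rw [Finset.sum_congr rfl (fun y _ => h1 y)]
    simp
  | @insert L S' hLS ih =>
    intro hdisj hν x
    have hLS' : ∀ M ∈ S', L ∩ M = ∅ := fun M hM =>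
      hdisj L (mem_insert_self _ _) M (mem_insert_of_mem hM) (fun h => hLS (h ▸ hM))
    have hνL : IsProbOn L (ν L) := hν L (mem_insert_self _ _)
    set K' := S'.biUnion id with hK'
    have hLK' : ∀ i ∈ L, i ∉ K' := by
      intro i hi hiK
      obtain ⟨M, hM, hiM⟩ := Finset.mem_biUnion.mp hiK
      have h0 := hLS' M hM
      have : i ∈ L ∩ M := Finset.mem_inter.mpr ⟨hi, hiM⟩
      rw [h0] at this
      exact absurd this (Finset.notMem_empty i)
    have hIH := ih (fun a ha b hb => hdisj a (mem_insert_of_mem ha) b (mem_insert_of_mem hb))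
      (fun M hM => hν M (mem_insert_of_mem hM)) x
    have hA := hνL.2.2 x
    have key : ∑ y : ∀ i, A i,
        (if ∀ i, i ∉ (insert L S').biUnion id → y i = x i
          then ∏ M ∈ insert L S', ν M y else 0)
        = (∑ z : ∀ i, A i, (if ∀ i, i ∉ L → z i = x i then ν L z else 0)) *
          (∑ w : ∀ i, A i,
            (if ∀ i, i ∉ K' → w i = x i then ∏ M ∈ S', ν M w else 0)) := by
      rw [← Finset.sum_filter, ← Finset.sum_filter, ← Finset.sum_filter,
        Finset.sum_mul_sum, ← Finset.sum_product']
      refine Finset.sum_nbij'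
        (fun y => (fun i => if i ∈ L then y i else x i, fun i => if i ∈ L then x i else y i))
        (fun p => fun i => if i ∈ L then p.1 i else p.2 i) ?_ ?_ ?_ ?_ ?_
      · intro y hy
        rw [Finset.mem_filter] at hy
        rw [Finset.mem_product, Finset.mem_filter, Finset.mem_filter]
        refine ⟨⟨Finset.mem_univ _, fun i hi => by simp [hi]⟩,
          Finset.mem_univ _, fun i hi => ?_⟩
        by_cases hiL : i ∈ L
        · simp [hiL]
        · simp only [hiL, if_neg, if_false]
          refine hy.2 i ?_
          simp only [Finset.mem_biUnion, not_exists]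
          intro t ht
          obtain ⟨ht1, ht2⟩ := ht
          rcases Finset.mem_insert.mp ht1 with h | h
          · exact hiL (h ▸ (by simpa using ht2))
          · exact hi (Finset.mem_biUnion.mpr ⟨t, h, ht2⟩)
      · intro p hp
        rw [Finset.mem_product, Finset.mem_filter, Finset.mem_filter] at hp
        rw [Finset.mem_filter]
        refine ⟨Finset.mem_univ _, fun i hi => ?_⟩
        simp only [Finset.mem_biUnion, not_exists] at hi
        have hiL : i ∉ L := fun h => hi L ⟨mem_insert_self _ _, by simpa using h⟩
        have hiK : i ∉ K' := by
          intro h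
          obtain ⟨M, hM, hiM⟩ := Finset.mem_biUnion.mp h
          exact hi M ⟨mem_insert_of_mem hM, by simpa using hiM⟩
        simp only [hiL, if_neg, if_false]
        exact hp.2.2 i hiK
      · intro y hy
        funext i
        by_cases hiL : i ∈ L <;> simp [hiL]
      · intro p hp
        rw [Finset.mem_product, Finset.mem_filter, Finset.mem_filter] at hp
        ext i
        · by_cases hiL : i ∈ L
          · simp [hiL]
          · simp only [hiL, if_neg, if_false]
            exact (hp.1.2 i hiL).symm
        · by_cases hiL : i ∈ L
          · simp only [hiL, if_pos, if_true]
            exact (hp.2.2 i (hLK' i hiL)).symm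
          · simp [hiL]
      · intro y hy
        rw [Finset.prod_insert hLS]
        congr 1
        · exact hνL.1 y _ (fun i hi => by simp [hi])
        · refine Finset.prod_congr rfl (fun M hM => ?_)
          refine (hν M (mem_insert_of_mem hM)).1 y _ (fun i hi => ?_)
          have hiL : i ∉ L := by
            intro h
            have h0 := hLS' M hM
            have : i ∈ L ∩ M := Finset.mem_inter.mpr ⟨h, hi⟩
            rw [h0] at this
            exact absurd this (Finset.notMem_empty i)
          simp [hiL]
    rw [key, hA, hIH, mul_one]

lemma marginal_prod (𝒟 : Finset (Finset I))
    (hne : ∀ L ∈ 𝒟, L.Nonempty)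
    (hdisj : ∀ L ∈ 𝒟, ∀ L' ∈ 𝒟, L ≠ L' → L ∩ L' = ∅)
    (hcov : 𝒟.biUnion id = Finset.univ)
    (ν : Finset I → (∀ i, A i) → ℝ) (hν : ∀ L ∈ 𝒟, IsProbOn L (ν L))
    (J : Finset I) (hJ : ∀ L ∈ 𝒟, J ∩ L = L ∨ J ∩ L = ∅) (x : ∀ i, A i) :
    marginal (fun y => ∏ L ∈ 𝒟, ν L y) J x
      = ∏ L ∈ 𝒟.filter (fun L => L ⊆ J), ν L x := by
  classical
  set S₂ := 𝒟.filter (fun L => ¬ L ⊆ J) with hS₂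
  have hS₂J : ∀ L ∈ S₂, J ∩ L = ∅ := by
    intro L hL
    rw [Finset.mem_filter] at hL
    rcases hJ L hL.1 with h | h
    · exact absurd (by rw [← h]; exact Finset.inter_subset_left) hL.2
    · exact h
  -- equivalence of conditions
  have hcond : ∀ y : ∀ i, A i, (∀ i ∈ J, y i = x i) ↔ (∀ i, i ∉ S₂.biUnion id → y i = x i) := by
    intro y
    constructor
    · intro h i hi
      by_contra hne'
      -- need i ∈ J
      by_cases hiJ : i ∈ J
      · exact hne' (h i hiJ)
      · -- i is covered by some L ∈ 𝒟
        have : i ∈ 𝒟.biUnion id := by rw [hcov]; exact Finset.mem_univ i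
        obtain ⟨L, hL, hiL⟩ := Finset.mem_biUnion.mp this
        have hiL' : i ∈ (L : Finset I) := by simpa using hiL
        have hLJ : ¬ L ⊆ J := fun hsub => hiJ (hsub hiL')
        exact hi (Finset.mem_biUnion.mpr ⟨L, Finset.mem_filter.mpr ⟨hL, hLJ⟩, by simpa using hiL'⟩)
    · intro h i hi
      refine h i ?_
      intro hc
      obtain ⟨L, hL, hiL⟩ := Finset.mem_biUnion.mp hc
      have hiL' : i ∈ (L : Finset I) := by simpa using hiL
      have := hS₂J L hL
      have : i ∈ J ∩ L := Finset.mem_inter.mpr ⟨hi, hiL'⟩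
      rw [hS₂J L hL] at this
      exact absurd this (Finset.notMem_empty i)
  have hsplit : ∀ y : ∀ i, A i, (∀ i ∈ J, y i = x i) →
      ∏ L ∈ 𝒟, ν L y = (∏ L ∈ 𝒟.filter (fun L => L ⊆ J), ν L x) * ∏ L ∈ S₂, ν L y := by
    intro y hy
    rw [← Finset.prod_filter_mul_prod_filter_not 𝒟 (fun L => L ⊆ J)]
    congr 1
    refine Finset.prod_congr rfl (fun L hL => ?_)
    rw [Finset.mem_filter] at hL
    exact (hν L hL.1).1 y x (fun i hi => hy i (hL.2 hi))
  have step : marginal (fun y => ∏ L ∈ 𝒟, ν L y) J x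
      = (∏ L ∈ 𝒟.filter (fun L => L ⊆ J), ν L x) *
        ∑ y : ∀ i, A i, (if ∀ i, i ∉ S₂.biUnion id → y i = x i then ∏ L ∈ S₂, ν L y else 0) := by
    rw [marginal, Finset.mul_sum]
    refine Finset.sum_congr rfl (fun y _ => ?_)
    by_cases hy : ∀ i ∈ J, y i = x i
    · rw [if_pos hy, if_pos ((hcond y).mp hy), hsplit y hy]
    · rw [if_neg hy, if_neg (fun h => hy ((hcond y).mpr h)), mul_zero]
  rw [step, keySum ν S₂
    (fun a ha b hb => hdisj a (Finset.mem_filter.mp ha).1 b (Finset.mem_filter.mp hb).1)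
    (fun L hL => hν L (Finset.mem_filter.mp hL).1) x, mul_one]

end Aux

end Meas

/-- a product measure over a partition finer than `𝒟^ρ` is a fixed point
of the recombination operator. -/
theorem Xi_fixed_point_of_finer_product {I : Type u} [Fintype I] [DecidableEq I]
    {A : I → Type*} [∀ i, Fintype (A i)] [∀ i, DecidableEq (A i)]
    (ρ : Finset I → ℝ) (hρ : IsProbVec ρ)
    (𝒟 : Finset (Finset I)) (hpart : IsPartitionF 𝒟)
    (hfine : ∀ L ∈ 𝒟, ∃ L' : Finset I, isAtomD ρ L' ∧ L ⊆ L')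
    (ν : Finset I → (∀ i, A i) → ℝ) (hν : ∀ L ∈ 𝒟, IsProbOn L (ν L)) :
    Xi ρ (fun x => ∏ L ∈ 𝒟, ν L x) = fun x => ∏ L ∈ 𝒟, ν L x := by
  obtain ⟨hne, hdisj, hcov⟩ := hpart
  funext x
  have hterm : ∀ J : Finset I,
      ρ J * (marginal (fun y => ∏ L ∈ 𝒟, ν L y) J x *
        marginal (fun y => ∏ L ∈ 𝒟, ν L y) Jᶜ x)
      = ρ J * ∏ L ∈ 𝒟, ν L x := by
    intro J
    rcases eq_or_lt_of_le (hρ.2.1 J) with h0 | hpos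
    · rw [← h0]; ring
    · have hJ : ∀ L ∈ 𝒟, J ∩ L = L ∨ J ∩ L = ∅ := by
        intro L hL
        obtain ⟨L', hL', hsub⟩ := hfine L hL
        rcases hL'.2 J hpos with h | h
        · left
          have hsub' : L' ⊆ J := by rw [← h]; exact Finset.inter_subset_left
          exact Finset.inter_eq_right.mpr (hsub.trans hsub')
        · right
          have hss : J ∩ L ⊆ J ∩ L' := Finset.inter_subset_inter (Finset.Subset.refl J) hsub
          rw [h] at hss
          exact Finset.subset_empty.mp hss
      have hJc : ∀ L ∈ 𝒟, Jᶜ ∩ L = L ∨ Jᶜ ∩ L = ∅ := by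
        intro L hL
        rcases hJ L hL with h | h
        · right
          have hLJ : L ⊆ J := Finset.inter_eq_right.mp h
          rw [Finset.eq_empty_iff_forall_notMem]
          intro i hi
          rw [Finset.mem_inter, Finset.mem_compl] at hi
          exact hi.1 (hLJ hi.2)
        · left
          rw [Finset.inter_eq_right]
          intro i hi
          rw [Finset.mem_compl]
          intro hiJ
          have hmem : i ∈ J ∩ L := Finset.mem_inter.mpr ⟨hiJ, hi⟩
          rw [h] at hmem
          exact Finset.notMem_empty i hmem
      rw [marginal_prod 𝒟 hne hdisj hcov ν hν J hJ x,
          marginal_prod 𝒟 hne hdisj hcov ν hν Jᶜ hJc x]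
      congr 1
      have hfe : 𝒟.filter (fun L => L ⊆ Jᶜ) = 𝒟.filter (fun L => ¬ L ⊆ J) := by
        apply Finset.filter_congr
        intro L hL
        obtain ⟨i, hi⟩ := hne L hL
        rcases hJ L hL with h | h
        · have hLJ : L ⊆ J := Finset.inter_eq_right.mp h
          constructor
          · intro hc
            exact absurd (hLJ hi) (Finset.mem_compl.mp (hc hi))
          · intro hc
            exact absurd hLJ hc
        · have hLJc : L ⊆ Jᶜ := by
            intro j hj
            rw [Finset.mem_compl]
            intro hjJ
            have hmem : j ∈ J ∩ L := Finset.mem_inter.mpr ⟨hjJ, hj⟩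
            rw [h] at hmem
            exact Finset.notMem_empty j hmem
          have hnLJ : ¬ L ⊆ J := by
            intro hc
            have hmem : i ∈ J ∩ L := Finset.mem_inter.mpr ⟨hc hi, hi⟩
            rw [h] at hmem
            exact Finset.notMem_empty i hmem
          simp [hLJc, hnLJ]
      rw [hfe, Finset.prod_filter_mul_prod_filter_not]
  calc Xi ρ (fun x => ∏ L ∈ 𝒟, ν L x) x
      = ∑ J : Finset I, ρ J * ∏ L ∈ 𝒟, ν L x := Finset.sum_congr rfl (fun J _ => hterm J)
    _ = ∏ L ∈ 𝒟, ν L x := by rw [← Finset.sum_mul, hρ.2.2, one_mul]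
end

section
/- For K ∈ 𝒴(𝒥_ρ) and a nonempty M ∈ K ∩ 𝒥_ρ with M ≠ K, the strict inequality ρ^K_K < ρ^M_M holds. -/
open scoped Classical
open Finset

universe u

/-- for `K ∈ 𝒴(𝒥_ρ)` and nonempty `M = J ∩ K ∈ K ∩ 𝒥_ρ` with `M ≠ K`,
one has the strict inequality `ρ^K_K < ρ^M_M`. -/
theorem rhoC_strict_mono {I : Type u} [Fintype I] [DecidableEq I]
    (ρ : Finset I → ℝ) (hρ : IsProbVec ρ) (K M J : Finset I) (hK : inY ρ K)
    (hJ : 0 < ρ J) (hJK : J ∩ K = M) (hMne : M.Nonempty) (hMK : M ≠ K) :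
    rhoC ρ K K < rhoC ρ M M := by
  unfold rhoC
  rw [if_pos rfl, if_pos rfl]
  have hMsubK : M ⊆ K := hJK ▸ Finset.inter_subset_right
  apply Finset.sum_lt_sum_of_subset (i := J)
  · intro J' hJ'
    simp only [Finset.mem_filter, Finset.mem_univ, true_and] at hJ' ⊢
    refine ⟨hJ'.1, ?_⟩
    rcases hJ'.2 with h | h
    · have hKJ' : K ⊆ J' := by
        intro i hi
        have : i ∈ J' ∩ K := h.symm ▸ hi
        exact (Finset.mem_inter.1 this).1
      left
      exact Finset.inter_eq_right.2 (hMsubK.trans hKJ')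
    · right
      have : J' ∩ M ⊆ J' ∩ K := Finset.inter_subset_inter_left hMsubK
      rw [h] at this
      exact Finset.subset_empty.1 this
  · simp only [Finset.mem_filter, Finset.mem_univ, true_and]
    refine ⟨hJ, Or.inl ?_⟩
    rw [Finset.inter_eq_right.2]
    intro i hi
    have : i ∈ J ∩ K := hJK.symm ▸ hi
    exact (Finset.mem_inter.1 this).1
  · simp only [Finset.mem_filter, Finset.mem_univ, true_and]
    intro h
    rcases h.2 with h' | h'
    · rw [hJK] at h'; exact hMK h'
    · rw [hJK] at h'; exact hMne.ne_empty h'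
  · exact hJ
  · intro j _ _; exact hρ.2.1 j
end

section
/- Assume ρ_J = ρ_{J^c} for all J in the support with J ≠ I. Then for every K ∈ 𝒴(𝒥_ρ) and every nonempty M ∈ K ∩ 𝒥_ρ with M ≠ K, one has ρ^K_M = ρ^K_{K∖M}. -/
open scoped Classical
open Finset

universe u

/-- if `ρ_J = ρ_{Jᶜ}` on the support (away from `I`), then
`ρ^K_M = ρ^K_{K∖M}` for nonempty `M = J ∩ K ≠ K`. -/
theorem rhoC_complement_symm {I : Type u} [Fintype I] [DecidableEq I]
    (ρ : Finset I → ℝ) (hρ : IsProbVec ρ)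
    (hsym : ∀ J : Finset I, 0 < ρ J → J ≠ Finset.univ → ρ J = ρ Jᶜ)
    (K M J : Finset I) (hK : inY ρ K)
    (hJ : 0 < ρ J) (hJK : J ∩ K = M) (hMne : M.Nonempty) (hMK : M ≠ K) :
    rhoC ρ K M = rhoC ρ K (K \ M) := by
  have hMsub : M ⊆ K := by rw [← hJK]; exact inter_subset_right
  have hKM_ne : K \ M ≠ K := by
    intro h
    have := hMne.choose_spec
    have hx : hMne.choose ∈ K \ M := by rw [h]; exact hMsub this
    exact (mem_sdiff.mp hx).2 this
  have hKMne : (K \ M).Nonempty := by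
    obtain ⟨x, hx, hxM⟩ := not_subset.mp (fun h => hMK (Finset.Subset.antisymm hMsub h))
    exact ⟨x, mem_sdiff.mpr ⟨hx, hxM⟩⟩
  unfold rhoC
  rw [if_neg hMK, if_neg hKM_ne]
  apply Finset.sum_nbij' (fun J' => J'ᶜ) (fun J' => J'ᶜ)
  · intro J' hJ'
    simp only [mem_filter, mem_univ, true_and] at hJ' ⊢
    obtain ⟨hpos, hint⟩ := hJ'
    have hne : J' ≠ univ := by
      intro h; rw [h, univ_inter] at hint; exact hMK hint.symm
    constructor
    · rw [← hsym J' hpos hne]; exact hpos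
    · have : J'ᶜ ∩ K = K \ J' := by
        ext x; simp [mem_sdiff, mem_inter, mem_compl, and_comm]
      rw [this, ← hint]
      ext x; simp only [mem_sdiff, mem_inter]; tauto
  · intro J' hJ'
    simp only [mem_filter, mem_univ, true_and] at hJ' ⊢
    obtain ⟨hpos, hint⟩ := hJ'
    have hne : J' ≠ univ := by
      intro h; rw [h, univ_inter] at hint; exact hKM_ne hint.symm
    constructor
    · rw [← hsym J' hpos hne]; exact hpos
    · have : J'ᶜ ∩ K = K \ J' := by
        ext x; simp [mem_sdiff, mem_inter, mem_compl, and_comm]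
      rw [this]
      have : K \ J' = K \ (J' ∩ K) := by
        ext x; simp only [mem_sdiff, mem_inter]; tauto
      rw [this, hint]
      ext x
      simp only [mem_sdiff] at *
      constructor
      · rintro ⟨hxK, hx⟩; by_contra hxM; exact hx ⟨hxK, hxM⟩
      · intro hxM; exact ⟨hMsub hxM, fun h => h.2 hxM⟩
  · intro J' _; simp
  · intro J' _; simp
  · intro J' hJ'
    simp only [mem_filter, mem_univ, true_and] at hJ'
    have hne : J' ≠ univ := by
      intro h; rw [h, univ_inter] at hJ'; exact hMK hJ'.2.symm
    exact hsym J' hJ'.1 hne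
end

section
/- For K ∈ 𝒴(𝒥_ρ), the marginal of Ξ[μ] on K satisfies Ξ[μ]_K = ρ^K_K μ_K + ∑_{M ∈ (K∩𝒥_ρ), ∅≠M≠K} ρ^K_M · (μ_M ⊗ μ_{K∖M}). -/
open scoped Classical
open Finset

universe u

section AuxProof
variable {I : Type u} [Fintype I] [DecidableEq I]
variable {A : I → Type*} [∀ i, Fintype (A i)] [∀ i, DecidableEq (A i)]

lemma marginal_empty' (μ : (∀ i, A i) → ℝ) (hμ : IsProbMeasure μ) (x : ∀ i, A i) :
    marginal μ (∅ : Finset I) x = 1 := by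
  simp [marginal, hμ.2]

lemma sum_ite_prod_marginal (μ : (∀ i, A i) → ℝ) (J K : Finset I) (x : ∀ i, A i) :
    ∑ y : ∀ i, A i, (if ∀ i ∈ K, y i = x i then marginal μ J y * marginal μ Jᶜ y else 0)
      = marginal μ (J ∩ K) x * marginal μ (K \ J) x := by
  have step1 : ∑ y : ∀ i, A i,
      (if ∀ i ∈ K, y i = x i then marginal μ J y * marginal μ Jᶜ y else 0)
      = ∑ y : ∀ i, A i, ∑ z : ∀ i, A i, ∑ w : ∀ i, A i,
        (if (∀ i ∈ K, y i = x i) ∧ (∀ i ∈ J, z i = y i) ∧ (∀ i ∈ Jᶜ, w i = y i)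
          then μ z * μ w else 0) := by
    refine Finset.sum_congr rfl fun y _ => ?_
    by_cases h : ∀ i ∈ K, y i = x i
    · rw [if_pos h]
      unfold marginal
      rw [Finset.sum_mul_sum]
      refine Finset.sum_congr rfl fun z _ => Finset.sum_congr rfl fun w _ => ?_
      rw [ite_zero_mul_ite_zero]
      exact if_congr (by tauto) rfl rfl
    · rw [if_neg h]
      exact (Finset.sum_eq_zero fun z _ => Finset.sum_eq_zero fun w _ =>
        if_neg (by tauto)).symm
  rw [step1, Finset.sum_comm]
  have step2 : ∀ z : ∀ i, A i,
      (∑ y : ∀ i, A i, ∑ w : ∀ i, A i,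
        (if (∀ i ∈ K, y i = x i) ∧ (∀ i ∈ J, z i = y i) ∧ (∀ i ∈ Jᶜ, w i = y i)
          then μ z * μ w else 0))
      = ∑ w : ∀ i, A i, ∑ y : ∀ i, A i,
        (if (∀ i ∈ K, y i = x i) ∧ (∀ i ∈ J, z i = y i) ∧ (∀ i ∈ Jᶜ, w i = y i)
          then μ z * μ w else 0) := fun z => Finset.sum_comm
  simp only [step2]
  have key : ∀ z w y : ∀ i, A i,
      ((∀ i ∈ K, y i = x i) ∧ (∀ i ∈ J, z i = y i) ∧ (∀ i ∈ Jᶜ, w i = y i))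
      ↔ (y = (fun i => if i ∈ J then z i else w i) ∧
          (∀ i ∈ J ∩ K, z i = x i) ∧ (∀ i ∈ K \ J, w i = x i)) := by
    intro z w y
    constructor
    · rintro ⟨h1, h2, h3⟩
      have hy : y = fun i => if i ∈ J then z i else w i := by
        funext i
        by_cases hi : i ∈ J
        · simp [hi, (h2 i hi).symm]
        · simp [hi, (h3 i (Finset.mem_compl.mpr hi)).symm]
      refine ⟨hy, fun i hi => ?_, fun i hi => ?_⟩
      · obtain ⟨hiJ, hiK⟩ := Finset.mem_inter.mp hi
        rw [h2 i hiJ, h1 i hiK]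
      · obtain ⟨hiK, hiJ⟩ := Finset.mem_sdiff.mp hi
        rw [h3 i (Finset.mem_compl.mpr hiJ), h1 i hiK]
    · rintro ⟨rfl, h1, h2⟩
      refine ⟨fun i hi => ?_, fun i hi => by simp [hi],
        fun i hi => by simp [Finset.mem_compl.mp hi]⟩
      by_cases hij : i ∈ J
      · simpa [hij] using h1 i (Finset.mem_inter.mpr ⟨hij, hi⟩)
      · simpa [hij] using h2 i (Finset.mem_sdiff.mpr ⟨hi, hij⟩)
  have step3 : ∀ z w : ∀ i, A i,
      (∑ y : ∀ i, A i,
        (if (∀ i ∈ K, y i = x i) ∧ (∀ i ∈ J, z i = y i) ∧ (∀ i ∈ Jᶜ, w i = y i)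
          then μ z * μ w else 0))
      = (if (∀ i ∈ J ∩ K, z i = x i) ∧ (∀ i ∈ K \ J, w i = x i)
          then μ z * μ w else 0) := by
    intro z w
    simp only [key z w]
    by_cases hC : (∀ i ∈ J ∩ K, z i = x i) ∧ (∀ i ∈ K \ J, w i = x i)
    · rw [if_pos hC]
      calc (∑ y : ∀ i, A i,
            if (y = fun i => if i ∈ J then z i else w i) ∧
              (∀ i ∈ J ∩ K, z i = x i) ∧ (∀ i ∈ K \ J, w i = x i)
            then μ z * μ w else 0)
          = ∑ y : ∀ i, A i,
            (if y = (fun i => if i ∈ J then z i else w i) then μ z * μ w else 0) :=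
            Finset.sum_congr rfl fun y _ => if_congr (and_iff_left hC) rfl rfl
        _ = μ z * μ w := by
            rw [Finset.sum_ite_eq' Finset.univ (fun i => if i ∈ J then z i else w i)
              (fun _ => μ z * μ w), if_pos (Finset.mem_univ _)]
    · rw [if_neg hC]
      exact Finset.sum_eq_zero fun y _ => if_neg fun h => hC h.2
  simp only [step3]
  unfold marginal
  rw [Finset.sum_mul_sum]
  refine Finset.sum_congr rfl fun z _ => Finset.sum_congr rfl fun w _ => ?_
  rw [ite_zero_mul_ite_zero]

end AuxProof

/-- the marginal of `Ξ[μ]` on `K ∈ 𝒴(𝒥_ρ)`: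
`Ξ[μ]_K = ρ^K_K μ_K + ∑_{∅ ≠ M ≠ K, M ∈ K∩𝒥_ρ} ρ^K_M (μ_M ⊗ μ_{K∖M})`. -/
theorem marginal_Xi {I : Type u} [Fintype I] [DecidableEq I]
    {A : I → Type*} [∀ i, Fintype (A i)] [∀ i, DecidableEq (A i)]
    (ρ : Finset I → ℝ) (hρ : IsProbVec ρ)
    (μ : (∀ i, A i) → ℝ) (hμ : IsProbMeasure μ)
    (K : Finset I) (hK : inY ρ K) :
    marginal (Xi ρ μ) K = fun x =>
      rhoC ρ K K * marginal μ K x +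
        ∑ M ∈ univ.filter
            (fun M : Finset I => M.Nonempty ∧ M ≠ K ∧ ∃ J, 0 < ρ J ∧ J ∩ K = M),
          rhoC ρ K M * (marginal μ M x * marginal μ (K \ M) x) := by
  funext x
  have hmain : marginal (Xi ρ μ) K x
      = ∑ J : Finset I, ρ J * (marginal μ (J ∩ K) x * marginal μ (K \ J) x) := by
    unfold marginal Xi
    have h1 : ∀ y : ∀ i, A i,
        (if ∀ i ∈ K, y i = x i then
          ∑ J : Finset I, ρ J * (marginal μ J y * marginal μ Jᶜ y) else 0)
        = ∑ J : Finset I,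
          ρ J * (if ∀ i ∈ K, y i = x i then marginal μ J y * marginal μ Jᶜ y else 0) := by
      intro y
      by_cases h : ∀ i ∈ K, y i = x i <;> simp [h]
    simp only [h1]
    rw [Finset.sum_comm]
    refine Finset.sum_congr rfl fun J _ => ?_
    rw [← Finset.mul_sum, sum_ite_prod_marginal μ J K x]
    rfl
  rw [hmain]
  set f : Finset I → ℝ := fun J => ρ J * (marginal μ (J ∩ K) x * marginal μ (K \ J) x)
    with hf
  have hfilter : ∑ J : Finset I, f J = ∑ J ∈ univ.filter (fun J => 0 < ρ J), f J := by
    refine (Finset.sum_filter_of_ne fun J _ hJ => ?_).symm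
    rcases lt_or_eq_of_le (hρ.2.1 J) with h | h
    · exact h
    · exact absurd (by simp [hf, ← h]) hJ
  rw [hfilter, ← Finset.sum_filter_add_sum_filter_not (univ.filter (fun J => 0 < ρ J))
    (fun J => J ∩ K = K ∨ J ∩ K = ∅) f]
  congr 1
  · -- part A
    have hA : ∀ J ∈ (univ.filter (fun J => 0 < ρ J)).filter
        (fun J => J ∩ K = K ∨ J ∩ K = ∅), f J = ρ J * marginal μ K x := by
      intro J hJ
      rcases (Finset.mem_filter.mp hJ).2 with h | h
      · have hsub : K ⊆ J := Finset.inter_eq_right.mp h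
        have hd : K \ J = ∅ := Finset.sdiff_eq_empty_iff_subset.mpr hsub
        simp [hf, h, hd, marginal_empty' μ hμ]
      · have hd : K \ J = K := by
          rw [Finset.sdiff_eq_self_iff_disjoint]
          exact Finset.disjoint_left.mpr fun i hiK hiJ =>
            (Finset.notMem_empty i) (h ▸ Finset.mem_inter.mpr ⟨hiJ, hiK⟩)
        simp [hf, h, hd, marginal_empty' μ hμ]
    rw [Finset.sum_congr rfl hA, ← Finset.sum_mul, rhoC, if_pos rfl,
      Finset.filter_filter]
  · -- part B
    set Q := (univ.filter (fun J => 0 < ρ J)).filter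
      (fun J => ¬(J ∩ K = K ∨ J ∩ K = ∅)) with hQ
    set S := univ.filter
      (fun M : Finset I => M.Nonempty ∧ M ≠ K ∧ ∃ J, 0 < ρ J ∧ J ∩ K = M) with hS
    have hmaps : ∀ J ∈ Q, J ∩ K ∈ S := by
      intro J hJ
      simp only [hQ, Finset.mem_filter, Finset.mem_univ, true_and] at hJ
      push_neg at hJ
      obtain ⟨hpos, hne1, hne2⟩ := hJ
      simp only [hS, Finset.mem_filter, Finset.mem_univ, true_and]
      exact ⟨hne2, hne1, J, hpos, rfl⟩
    rw [← Finset.sum_fiberwise_of_maps_to hmaps f]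
    refine Finset.sum_congr rfl fun M hM => ?_
    simp only [hS, Finset.mem_filter, Finset.mem_univ, true_and] at hM
    obtain ⟨hMne, hMK, _⟩ := hM
    have hfib : Q.filter (fun J => J ∩ K = M)
        = univ.filter (fun J => 0 < ρ J ∧ J ∩ K = M) := by
      ext J
      simp only [hQ, Finset.mem_filter, Finset.mem_univ, true_and]
      constructor
      · rintro ⟨⟨h1, _⟩, h3⟩; exact ⟨h1, h3⟩
      · rintro ⟨h1, h3⟩
        refine ⟨⟨h1, ?_⟩, h3⟩
        rw [h3]
        push_neg
        exact ⟨hMK, hMne⟩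
    have hval : ∀ J ∈ Q.filter (fun J => J ∩ K = M),
        f J = ρ J * (marginal μ M x * marginal μ (K \ M) x) := by
      intro J hJ
      have h3 : J ∩ K = M := (Finset.mem_filter.mp hJ).2
      have h4 : K \ J = K \ M := by
        rw [← h3]
        ext i
        simp only [Finset.mem_sdiff, Finset.mem_inter]
        tauto
      simp [hf, h3, h4]
    rw [Finset.sum_congr rfl hval, ← Finset.sum_mul, rhoC, if_neg hMK, ← hfib]
end

section
/- The matrix P on the set ∂(𝒯) of leaf-partitions, defined by P_{δ,δ'} = ∏_{ℓ∈δ∩δ'} ρ^ℓ_ℓ · ∏_{ℓ∈δ∖δ'} (ρ^ℓ_{ℓ_1} + ρ^ℓ_{ℓ_2}) when δ → δ' (where {ℓ_1, ℓ_2} is the dyadic split of ℓ in δ'), and P_{δ,δ'} = 0 otherwise, is row-stochastic: ∑_{δ'} P_{δ,δ'} = 1 for every δ. -/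
open scoped Classical
open Finset

universe u

section Trees
variable {I : Type u} [Fintype I] [DecidableEq I]

/-- The leaf of a branch of length `n`. -/
def leafOf {n : ℕ} (b : Fin (n + 1) → Finset I) : Finset I := b (Fin.last n)

end Trees

/-- The family `𝒯_n` of rooted dyadic trees of depth `n`, a tree being identified with its
(finite) set of branches; each branch is a tuple `(b_0, …, b_n)` of subsets of `I` with
`b_0 = I`.  In one step, every branch is extended either by repeating its leaf (not allowed
when `n = 0` and `ρ_I = 0`), or, when its leaf is not an atom of `𝒟^ρ`, by splitting the
leaf into the two nonempty parts `{ℓ∩J, ℓ∖J}` determined by some `J` in the support of `ρ`. -/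
inductive IsTree {I : Type u} [Fintype I] [DecidableEq I] (ρ : Finset I → ℝ) :
    (n : ℕ) → Finset (Fin (n + 1) → Finset I) → Prop
  | zero : IsTree ρ 0 {fun _ => Finset.univ}
  | succ {n : ℕ} {T : Finset (Fin (n + 1) → Finset I)}
      (ext : (Fin (n + 1) → Finset I) → Finset (Fin (n + 2) → Finset I))
      (hT : IsTree ρ n T)
      (hext : ∀ b ∈ T,
        (¬ (n = 0 ∧ ρ Finset.univ = 0) ∧ ext b = {Fin.snoc b (leafOf b)}) ∨
        (¬ isAtomD ρ (leafOf b) ∧ ∃ J : Finset I, 0 < ρ J ∧ J ≠ Finset.univ ∧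
          (leafOf b ∩ J).Nonempty ∧ (leafOf b \ J).Nonempty ∧
          ext b = {Fin.snoc b (leafOf b ∩ J), Fin.snoc b (leafOf b \ J)})) :
      IsTree ρ (n + 1) (T.biUnion ext)

section Trees2
variable {I : Type u} [Fintype I] [DecidableEq I]

/-- The weight `∏_{r=1}^{n} ρ^{b_{r-1}}_{b_r}` of a branch. -/
noncomputable def branchWeight (ρ : Finset I → ℝ) {n : ℕ} (b : Fin (n + 1) → Finset I) : ℝ :=
  ∏ r : Fin n, rhoC ρ (b r.castSucc) (b r.succ)

/-- The coefficient `q^n_δ`: total weight of the trees of depth `n` with leaf set `δ`. -/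
noncomputable def qcoef (ρ : Finset I → ℝ) (n : ℕ) (δ : Finset (Finset I)) : ℝ :=
  ∑ T : Finset (Fin (n + 1) → Finset I),
    if IsTree ρ n T ∧ T.image leafOf = δ then ∑ b ∈ T, branchWeight ρ b else 0

/-- `δ ∈ ∂(𝒯_n)`: `δ` is the leaf partition of some tree of depth `n`. -/
def LeafPart (ρ : Finset I → ℝ) (n : ℕ) (δ : Finset (Finset I)) : Prop :=
  ∃ T : Finset (Fin (n + 1) → Finset I), IsTree ρ n T ∧ T.image leafOf = δ

/-- `δ ∈ ∂(𝒯)`: `δ` is the leaf partition of some tree. -/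
def LeafPartAny (ρ : Finset I → ℝ) (δ : Finset (Finset I)) : Prop := ∃ n, LeafPart ρ n δ

/-- The relation `δ → δ'`: every atom of `δ` is either kept or split into two nonempty
parts by a set in the support of `ρ`. -/
def stepRel (ρ : Finset I → ℝ) (δ δ' : Finset (Finset I)) : Prop :=
  ∃ c : Finset I → Finset (Finset I),
    (∀ ℓ ∈ δ, c ℓ = {ℓ} ∨ ∃ J : Finset I, 0 < ρ J ∧ J ≠ Finset.univ ∧
      (ℓ ∩ J).Nonempty ∧ (ℓ \ J).Nonempty ∧ c ℓ = {ℓ ∩ J, ℓ \ J}) ∧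
    δ' = δ.biUnion c

/-- The transition matrix `P` of equation (23):
`P_{δ,δ'} = ∏_{ℓ∈δ∩δ'} ρ^ℓ_ℓ ⬝ ∏_{ℓ∈δ∖δ'} (ρ^ℓ_{ℓ_1} + ρ^ℓ_{ℓ_2})` when `δ → δ'`, else `0`;
here `ℓ_1, ℓ_2` are the parts of `ℓ` in `δ'`. -/
noncomputable def Pmat (ρ : Finset I → ℝ) (δ δ' : Finset (Finset I)) : ℝ :=
  if stepRel ρ δ δ' then
    (∏ ℓ ∈ δ ∩ δ', rhoC ρ ℓ ℓ) *
      ∏ ℓ ∈ δ \ δ', ∑ m ∈ δ'.filter (fun m => m ⊆ ℓ ∧ m.Nonempty), rhoC ρ ℓ m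
  else 0

/-- The distribution at time `n` of the Markov chain with transition matrix `P`
and initial distribution `ν`. -/
noncomputable def chainDist (ρ : Finset I → ℝ) (ν : Finset (Finset I) → ℝ) :
    ℕ → Finset (Finset I) → ℝ
  | 0 => ν
  | n + 1 => fun δ' => ∑ δ : Finset (Finset I), chainDist ρ ν n δ * Pmat ρ δ δ'

/-- The Dirac initial distribution at a state `δ0`. -/
noncomputable def diracAt (δ0 : Finset (Finset I)) : Finset (Finset I) → ℝ :=
  fun δ => if δ = δ0 then 1 else 0

/-- The partition `𝒟^ρ` (the set of atoms generated by the support of `ρ`). -/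
noncomputable def DrhoP (ρ : Finset I → ℝ) : Finset (Finset I) :=
  univ.filter (fun L => isAtomD ρ L)

/-- The partition `𝒟^{ρ,K}`: the atoms of `𝒟^ρ` disjoint from `K`, together with `K`. -/
noncomputable def DrhoK (ρ : Finset I → ℝ) (K : Finset I) : Finset (Finset I) :=
  univ.filter (fun L => isAtomD ρ L ∧ L ∩ K = ∅) ∪ {K}

/-- `∂(𝒯)^ℰ = {𝒟^{ρ,K} : K ∈ 𝒴(𝒥_ρ), ρ^K_K = η}`. -/
noncomputable def Efin (ρ : Finset I → ℝ) (η : ℝ) : Finset (Finset (Finset I)) :=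
  univ.filter (fun δ : Finset (Finset I) =>
    ∃ K : Finset I, inY ρ K ∧ rhoC ρ K K = η ∧ δ = DrhoK ρ K)

/-- The distribution at time `n` of the chain started at `δ0` and killed upon entering
`∂(𝒯)^ℰ`; for `γ ∈ ∂(𝒯)^ℰ`, `killedDist ρ η δ0 n γ = P_{δ0}(ζ^ℰ = n, Y_n = γ)`. -/
noncomputable def killedDist (ρ : Finset I → ℝ) (η : ℝ) (δ0 : Finset (Finset I)) :
    ℕ → Finset (Finset I) → ℝ
  | 0 => fun δ => if δ = δ0 then 1 else 0
  | n + 1 => fun δ' =>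
      ∑ δ ∈ univ.filter (fun δ : Finset (Finset I) => δ ∉ Efin ρ η),
        killedDist ρ η δ0 n δ * Pmat ρ δ δ'

/-- `φ_{δ0} = E_{δ0}(η^{-ζ^ℰ}, ζ^ℰ < ∞) = ∑_{j≥0} η^{-j} P_{δ0}(ζ^ℰ = j)`. -/
noncomputable def phiVec (ρ : Finset I → ℝ) (η : ℝ) (δ0 : Finset (Finset I)) : ℝ :=
  ∑' j : ℕ, (η ^ j)⁻¹ * ∑ γ ∈ Efin ρ η, killedDist ρ η δ0 j γ

end Trees2

section RowStoch
variable {I : Type u} [Fintype I] [DecidableEq I]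

/-- The predicate on possible children-sets of an atom `ℓ` in one step of the chain. -/
def choicePred (ρ : Finset I → ℝ) (ℓ : Finset I) (s : Finset (Finset I)) : Prop :=
  s = {ℓ} ∨ ∃ J : Finset I, 0 < ρ J ∧ J ≠ Finset.univ ∧
    (ℓ ∩ J).Nonempty ∧ (ℓ \ J).Nonempty ∧ s = {ℓ ∩ J, ℓ \ J}

lemma choice_mem {ρ : Finset I → ℝ} {ℓ : Finset I} {s : Finset (Finset I)} {m : Finset I}
    (hs : choicePred ρ ℓ s) (hm : m ∈ s) :
    (m = ℓ ∧ s = {ℓ}) ∨ (m ⊆ ℓ ∧ m.Nonempty ∧ m ≠ ℓ ∧ s = {m, ℓ \ m}) := by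
  rcases hs with h | ⟨J, hJ, hJu, h1, h2, h⟩
  · subst h
    rw [Finset.mem_singleton] at hm
    exact Or.inl ⟨hm, rfl⟩
  · subst h
    rw [Finset.mem_insert, Finset.mem_singleton] at hm
    right
    rcases hm with hm | hm
    · subst hm
      refine ⟨Finset.inter_subset_left, h1, ?_, ?_⟩
      · intro hEq
        have hsub : ℓ ⊆ J := by
          intro i hi
          have h' : i ∈ ℓ ∩ J := by rw [hEq]; exact hi
          exact (Finset.mem_inter.mp h').2
        obtain ⟨i, hi⟩ := h2
        rw [Finset.mem_sdiff] at hi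
        exact hi.2 (hsub hi.1)
      · rw [Finset.sdiff_inter_self_left]
    · subst hm
      refine ⟨Finset.sdiff_subset, h2, ?_, ?_⟩
      · intro hEq
        obtain ⟨i, hi⟩ := h1
        rw [Finset.mem_inter] at hi
        have h' : i ∈ ℓ \ J := by rw [hEq]; exact hi.1
        exact (Finset.mem_sdiff.mp h').2 hi.2
      · rw [Finset.sdiff_sdiff_self_left, Finset.pair_comm]

/-- Per-atom normalization: the total weight of all choices at an atom is `1`. -/
lemma choice_sum_one (ρ : Finset I → ℝ) (hρ : IsProbVec ρ) (ℓ : Finset I) :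
    ∑ s ∈ univ.filter (choicePred ρ ℓ), ∑ m ∈ s, rhoC ρ ℓ m = 1 := by
  classical
  set C : Finset (Finset (Finset I)) := univ.filter (choicePred ρ ℓ) with hC
  have hmemC : ∀ s, s ∈ C ↔ choicePred ρ ℓ s := by
    intro s; rw [hC, Finset.mem_filter]; simp
  -- Step (i): disjoint union over choices
  have hdisjC : (C : Set (Finset (Finset I))).PairwiseDisjoint id := by
    intro s hs s' hs' hne
    simp only [Function.onFun, id]
    rw [Finset.disjoint_left]
    intro m hm hm'
    have h1 := choice_mem ((hmemC s).mp hs) hm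
    have h2 := choice_mem ((hmemC s').mp hs') hm'
    rcases h1 with ⟨e1, e2⟩ | ⟨_, _, e1, e2⟩ <;> rcases h2 with ⟨f1, f2⟩ | ⟨_, _, f1, f2⟩
    · exact hne (e2.trans f2.symm)
    · exact f1 e1
    · exact e1 f1
    · exact hne (e2.trans f2.symm)
  have hsplit : ∑ s ∈ C, ∑ m ∈ s, rhoC ρ ℓ m = ∑ m ∈ C.biUnion id, rhoC ρ ℓ m :=
    (Finset.sum_biUnion hdisjC).symm
  rw [hsplit]
  -- the union of all choices
  set D : Finset (Finset I) := C.biUnion id with hD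
  have hℓD : ℓ ∈ D := by
    rw [hD, Finset.mem_biUnion]
    exact ⟨{ℓ}, (hmemC _).mpr (Or.inl rfl), Finset.mem_singleton_self ℓ⟩
  set T : Finset (Finset I) :=
    insert ℓ (univ.filter (fun m => m ⊆ ℓ ∧ m.Nonempty ∧ m ≠ ℓ)) with hT
  have hDT : D ⊆ T := by
    intro m hm
    rw [hD, Finset.mem_biUnion] at hm
    obtain ⟨s, hs, hms⟩ := hm
    rcases choice_mem ((hmemC s).mp hs) hms with ⟨e1, -⟩ | ⟨e1, e2, e3, -⟩
    · rw [hT, e1]; exact Finset.mem_insert_self _ _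
    · rw [hT]; exact Finset.mem_insert_of_mem (by simp [e1, e2, e3])
  -- Step (ii): extend the sum to all nonempty subsets (plus ℓ itself)
  have h2 : ∑ m ∈ D, rhoC ρ ℓ m = ∑ m ∈ T, rhoC ρ ℓ m := by
    apply Finset.sum_subset hDT
    intro m hmT hmD
    have hmℓ : m ≠ ℓ := fun h => hmD (h ▸ hℓD)
    rw [hT, Finset.mem_insert] at hmT
    rcases hmT with h | h
    · exact absurd h hmℓ
    rw [Finset.mem_filter] at h
    obtain ⟨-, hsub, hne, -⟩ := h
    simp only [rhoC, if_neg hmℓ]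
    apply Finset.sum_eq_zero
    intro J hJ
    rw [Finset.mem_filter] at hJ
    obtain ⟨-, hJpos, hJm⟩ := hJ
    exfalso
    apply hmD
    have hiℓJ : ℓ ∩ J = m := by rw [Finset.inter_comm]; exact hJm
    have hsℓJ : ℓ \ J = ℓ \ m := by
      rw [← hiℓJ, Finset.sdiff_inter_self_left]
    have hne2 : (ℓ \ m).Nonempty := by
      rw [Finset.sdiff_nonempty]
      intro hle
      exact hmℓ (Finset.Subset.antisymm hsub hle)
    have hJu : J ≠ Finset.univ := by
      intro h; subst h
      rw [Finset.univ_inter] at hJm  -- J ∩ ℓ with J = univ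
      exact hmℓ hJm.symm
    have hsC : ({ℓ ∩ J, ℓ \ J} : Finset (Finset I)) ∈ C := by
      refine (hmemC _).mpr (Or.inr ⟨J, hJpos, hJu, ?_, ?_, rfl⟩)
      · rw [hiℓJ]; exact hne
      · rw [hsℓJ]; exact hne2
    rw [hD, Finset.mem_biUnion]
    exact ⟨_, hsC, Finset.mem_insert.mpr (Or.inl hiℓJ.symm)⟩
  rw [h2]
  -- Step (iii): fiberwise decomposition of the support of ρ
  set supp : Finset (Finset I) := univ.filter (fun J => 0 < ρ J) with hsupp
  set f : Finset I → Finset I :=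
    fun J => if J ∩ ℓ = ℓ ∨ J ∩ ℓ = ∅ then ℓ else J ∩ ℓ with hf
  have hmaps : ∀ J ∈ supp, f J ∈ T := by
    intro J hJ
    simp only [hf]
    by_cases h : J ∩ ℓ = ℓ ∨ J ∩ ℓ = ∅
    · rw [if_pos h]; exact Finset.mem_insert_self _ _
    · rw [if_neg h]
      push_neg at h
      refine Finset.mem_insert_of_mem ?_
      simp only [Finset.mem_filter, Finset.mem_univ, true_and]
      exact ⟨Finset.inter_subset_right, h.2, h.1⟩
  have h3 : ∑ m ∈ T, rhoC ρ ℓ m = ∑ J ∈ supp, ρ J := by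
    rw [← Finset.sum_fiberwise_of_maps_to hmaps (fun J => ρ J)]
    apply Finset.sum_congr rfl
    intro m hm
    by_cases hmℓ : m = ℓ
    · subst hmℓ
      simp only [rhoC, if_pos rfl]
      apply Finset.sum_congr _ (fun _ _ => rfl)
      ext J
      simp only [hsupp, Finset.mem_filter, Finset.mem_univ, true_and, hf]
      constructor
      · rintro ⟨h1, h2⟩
        refine ⟨h1, ?_⟩
        rw [if_pos h2]
      · rintro ⟨h1, h2⟩
        refine ⟨h1, ?_⟩
        by_cases hcond : J ∩ m = m ∨ J ∩ m = ∅
        · exact hcond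
        · rw [if_neg hcond] at h2; exact Or.inl h2
    · simp only [rhoC, if_neg hmℓ]
      rw [hT, Finset.mem_insert] at hm
      rcases hm with h | hm
      · exact absurd h hmℓ
      rw [Finset.mem_filter] at hm
      obtain ⟨-, hsub, hne, -⟩ := hm
      apply Finset.sum_congr _ (fun _ _ => rfl)
      ext J
      simp only [hsupp, Finset.mem_filter, Finset.mem_univ, true_and, hf]
      constructor
      · rintro ⟨h1, h2⟩
        refine ⟨h1, ?_⟩
        have hcond : ¬ (J ∩ ℓ = ℓ ∨ J ∩ ℓ = ∅) := by
          rintro (h | h)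
          · exact hmℓ (h2.symm.trans h)
          · exact Finset.nonempty_iff_ne_empty.mp hne (h2.symm.trans h)
        rw [if_neg hcond]; exact h2
      · rintro ⟨h1, h2⟩
        refine ⟨h1, ?_⟩
        by_cases hcond : J ∩ ℓ = ℓ ∨ J ∩ ℓ = ∅
        · rw [if_pos hcond] at h2; exact absurd h2.symm hmℓ
        · rw [if_neg hcond] at h2; exact h2
  rw [h3]
  -- Step (iv): total mass of the support is 1
  rw [← hρ.2.2]
  apply Finset.sum_subset (Finset.filter_subset _ _)
  intro J _ hJ
  simp only [Finset.mem_filter, Finset.mem_univ, true_and] at hJ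
  exact le_antisymm (not_lt.mp hJ) (hρ.2.1 J)

end RowStoch
section RowStoch2
variable {I : Type u} [Fintype I] [DecidableEq I]

lemma leafOf_snoc {n : ℕ} (b : Fin (n + 1) → Finset I) (x : Finset I) :
    leafOf (Fin.snoc b x) = x := by
  simp [leafOf, Fin.snoc_last]

lemma univ_nonempty_of_probVec (ρ : Finset I → ℝ) (hρ : IsProbVec ρ) :
    (Finset.univ : Finset I).Nonempty := by
  by_contra h
  have hu : (Finset.univ : Finset I) = ∅ := Finset.not_nonempty_iff_eq_empty.mp h
  have h0 : ∀ J : Finset I, J = ∅ := fun J =>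
    Finset.subset_empty.mp (hu ▸ Finset.subset_univ J)
  have h1 : (1 : ℝ) = 0 := by
    rw [← hρ.2.2]
    exact Finset.sum_eq_zero fun J _ => by rw [h0 J]; exact hρ.1
  exact one_ne_zero h1

lemma tree_leaves (ρ : Finset I → ℝ) (hρ : IsProbVec ρ) {n : ℕ}
    {T : Finset (Fin (n + 1) → Finset I)} (hT : IsTree ρ n T) :
    (∀ b ∈ T, (leafOf b).Nonempty) ∧
      ∀ b ∈ T, ∀ b' ∈ T, b ≠ b' → leafOf b ∩ leafOf b' = ∅ := by
  induction hT with
  | zero =>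
    constructor
    · intro b hb
      rw [Finset.mem_singleton] at hb
      subst hb
      simpa [leafOf] using univ_nonempty_of_probVec ρ hρ
    · intro b hb b' hb' hne
      rw [Finset.mem_singleton] at hb hb'
      exact absurd (hb.trans hb'.symm) hne
  | @succ n T ext hT2 hext ih =>
    obtain ⟨ihne, ihdisj⟩ := ih
    have hsub : ∀ c ∈ T, ∀ c1 ∈ ext c, leafOf c1 ⊆ leafOf c ∧ (leafOf c1).Nonempty := by
      intro c hc c1 hc1
      rcases hext c hc with ⟨-, hE⟩ | ⟨-, J, hJ, -, hJ1, hJ2, hE⟩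
      · rw [hE, Finset.mem_singleton] at hc1
        subst hc1
        rw [leafOf_snoc]
        exact ⟨Finset.Subset.refl _, ihne c hc⟩
      · rw [hE, Finset.mem_insert, Finset.mem_singleton] at hc1
        rcases hc1 with h | h <;> subst h <;> rw [leafOf_snoc]
        · exact ⟨Finset.inter_subset_left, hJ1⟩
        · exact ⟨Finset.sdiff_subset, hJ2⟩
    constructor
    · intro b1 hb1
      obtain ⟨b, hb, hbe⟩ := Finset.mem_biUnion.mp hb1
      exact (hsub b hb b1 hbe).2
    · intro b1 hb1 b1' hb1' hne
      obtain ⟨b, hb, hbe⟩ := Finset.mem_biUnion.mp hb1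
      obtain ⟨b', hb', hbe'⟩ := Finset.mem_biUnion.mp hb1'
      by_cases hbb : b = b'
      · subst hbb
        rcases hext b hb with ⟨-, hE⟩ | ⟨-, J, hJ, -, hJ1, hJ2, hE⟩
        · rw [hE, Finset.mem_singleton] at hbe hbe'
          exact absurd (hbe.trans hbe'.symm) hne
        · rw [hE, Finset.mem_insert, Finset.mem_singleton] at hbe hbe'
          have hJd : (leafOf b ∩ J) ∩ (leafOf b \ J) = ∅ := by
            ext i
            simp only [Finset.mem_inter, Finset.mem_sdiff, Finset.notMem_empty, iff_false]
            tauto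
          rcases hbe with h1 | h1 <;> rcases hbe' with h2 | h2
          · exact absurd (h1.trans h2.symm) hne
          · subst h1; subst h2
            rw [leafOf_snoc, leafOf_snoc]
            exact hJd
          · subst h1; subst h2
            rw [leafOf_snoc, leafOf_snoc, Finset.inter_comm]
            exact hJd
          · exact absurd (h1.trans h2.symm) hne
      · have h := ihdisj b hb b' hb' hbb
        exact Finset.subset_empty.mp (h ▸ Finset.inter_subset_inter
          (hsub b hb b1 hbe).1 (hsub b' hb' b1' hbe').1)

end RowStoch2
section RowStoch3
variable {I : Type u} [Fintype I] [DecidableEq I]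

lemma filter_biUnion_choice (ρ : Finset I → ℝ) {δ : Finset (Finset I)}
    (hne : ∀ ℓ ∈ δ, ℓ.Nonempty) (hdisj : ∀ ℓ ∈ δ, ∀ ℓ' ∈ δ, ℓ ≠ ℓ' → ℓ ∩ ℓ' = ∅)
    {c : Finset I → Finset (Finset I)} (hc : ∀ ℓ ∈ δ, choicePred ρ ℓ (c ℓ))
    {ℓ : Finset I} (hℓ : ℓ ∈ δ) :
    (δ.biUnion c).filter (fun m => m ⊆ ℓ ∧ m.Nonempty) = c ℓ := by
  ext m
  simp only [Finset.mem_filter, Finset.mem_biUnion]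
  constructor
  · rintro ⟨⟨ℓ'', hℓ'', hm⟩, hsubm, hmne⟩
    have hsub'' : m ⊆ ℓ'' := by
      rcases choice_mem (hc ℓ'' hℓ'') hm with ⟨h1, -⟩ | ⟨h1, -⟩
      · exact h1 ▸ Finset.Subset.refl m
      · exact h1
    have heq : ℓ'' = ℓ := by
      by_contra hne'
      have h0 := hdisj ℓ'' hℓ'' ℓ hℓ hne'
      have hsub2 : m ⊆ ℓ'' ∩ ℓ := Finset.subset_inter hsub'' hsubm
      rw [h0, Finset.subset_empty] at hsub2
      exact hmne.ne_empty hsub2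
    exact heq ▸ hm
  · intro hm
    refine ⟨⟨ℓ, hℓ, hm⟩, ?_⟩
    rcases choice_mem (hc ℓ hℓ) hm with ⟨h1, -⟩ | ⟨h1, h2, -⟩
    · subst h1
      exact ⟨Finset.Subset.refl m, hne m hℓ⟩
    · exact ⟨h1, h2⟩

lemma keep_iff (ρ : Finset I → ℝ) {δ : Finset (Finset I)}
    (hne : ∀ ℓ ∈ δ, ℓ.Nonempty) (hdisj : ∀ ℓ ∈ δ, ∀ ℓ' ∈ δ, ℓ ≠ ℓ' → ℓ ∩ ℓ' = ∅)
    {c : Finset I → Finset (Finset I)} (hc : ∀ ℓ ∈ δ, choicePred ρ ℓ (c ℓ))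
    {ℓ : Finset I} (hℓ : ℓ ∈ δ) :
    ℓ ∈ δ.biUnion c ↔ c ℓ = {ℓ} := by
  constructor
  · intro h
    have hmem : ℓ ∈ (δ.biUnion c).filter (fun m => m ⊆ ℓ ∧ m.Nonempty) :=
      Finset.mem_filter.mpr ⟨h, Finset.Subset.refl ℓ, hne ℓ hℓ⟩
    rw [filter_biUnion_choice ρ hne hdisj hc hℓ] at hmem
    rcases choice_mem (hc ℓ hℓ) hmem with ⟨-, h2⟩ | ⟨-, -, h1, -⟩
    · exact h2
    · exact absurd rfl h1
  · intro h
    apply Finset.mem_biUnion.mpr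
    exact ⟨ℓ, hℓ, by rw [h]; exact Finset.mem_singleton_self ℓ⟩

lemma Pmat_value (ρ : Finset I → ℝ) {δ : Finset (Finset I)}
    (hne : ∀ ℓ ∈ δ, ℓ.Nonempty) (hdisj : ∀ ℓ ∈ δ, ∀ ℓ' ∈ δ, ℓ ≠ ℓ' → ℓ ∩ ℓ' = ∅)
    {c : Finset I → Finset (Finset I)} (hc : ∀ ℓ ∈ δ, choicePred ρ ℓ (c ℓ)) :
    Pmat ρ δ (δ.biUnion c) = ∏ ℓ ∈ δ, ∑ m ∈ c ℓ, rhoC ρ ℓ m := by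
  classical
  set δ' := δ.biUnion c with hδ'
  have hstep : stepRel ρ δ δ' := ⟨c, hc, hδ'⟩
  rw [Pmat, if_pos hstep]
  have hfilter : ∀ ℓ ∈ δ, δ'.filter (fun m => m ⊆ ℓ ∧ m.Nonempty) = c ℓ := by
    intro ℓ hℓ
    exact filter_biUnion_choice ρ hne hdisj hc hℓ
  have h1 : ∏ ℓ ∈ δ ∩ δ', rhoC ρ ℓ ℓ = ∏ ℓ ∈ δ ∩ δ', ∑ m ∈ c ℓ, rhoC ρ ℓ m := by
    apply Finset.prod_congr rfl
    intro ℓ hℓ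
    rw [Finset.mem_inter] at hℓ
    have hk : c ℓ = {ℓ} := (keep_iff ρ hne hdisj hc hℓ.1).mp hℓ.2
    rw [hk, Finset.sum_singleton]
  have h2 : ∏ ℓ ∈ δ \ δ', (∑ m ∈ δ'.filter (fun m => m ⊆ ℓ ∧ m.Nonempty), rhoC ρ ℓ m) =
      ∏ ℓ ∈ δ \ δ', ∑ m ∈ c ℓ, rhoC ρ ℓ m := by
    apply Finset.prod_congr rfl
    intro ℓ hℓ
    rw [hfilter ℓ (Finset.mem_sdiff.mp hℓ).1]
  rw [h1, h2, Finset.prod_inter_mul_prod_diff]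

lemma sum_Pmat_eq_one (ρ : Finset I → ℝ) (hρ : IsProbVec ρ) {δ : Finset (Finset I)}
    (hne : ∀ ℓ ∈ δ, ℓ.Nonempty) (hdisj : ∀ ℓ ∈ δ, ∀ ℓ' ∈ δ, ℓ ≠ ℓ' → ℓ ∩ ℓ' = ∅) :
    ∑ δ' : Finset (Finset I), Pmat ρ δ δ' = 1 := by
  classical
  have hstep_sum : ∑ δ' : Finset (Finset I), Pmat ρ δ δ' =
      ∑ δ' ∈ univ.filter (fun δ' => stepRel ρ δ δ'), Pmat ρ δ δ' := by
    symm
    apply Finset.sum_subset (Finset.filter_subset _ _)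
    intro δ' _ hδ'
    simp only [Finset.mem_filter, Finset.mem_univ, true_and] at hδ'
    rw [Pmat, if_neg hδ']
  rw [hstep_sum]
  have hbij : ∑ δ' ∈ univ.filter (fun δ' => stepRel ρ δ δ'), Pmat ρ δ δ' =
      ∑ p ∈ δ.pi (fun ℓ => univ.filter (choicePred ρ ℓ)),
        ∏ ℓ ∈ δ.attach, ∑ m ∈ p ℓ.1 ℓ.2, rhoC ρ ℓ.1 m := by
    -- helper: from a pi element, build a global choice function
    have hjmem : ∀ p ∈ δ.pi (fun ℓ => univ.filter (choicePred ρ ℓ)),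
        ∀ ℓ (h : ℓ ∈ δ), choicePred ρ ℓ (p ℓ h) := by
      intro p hp ℓ h
      have := Finset.mem_pi.mp hp ℓ h
      simpa using this
    have hjglue : ∀ p : (ℓ : Finset I) → ℓ ∈ δ → Finset (Finset I),
        δ.attach.biUnion (fun ℓ => p ℓ.1 ℓ.2) =
          δ.biUnion (fun ℓ => if h : ℓ ∈ δ then p ℓ h else {ℓ}) := by
      intro p
      ext x
      simp only [Finset.mem_biUnion, Finset.mem_attach, true_and, Subtype.exists]
      constructor
      · rintro ⟨a, ha, hx⟩
        exact ⟨a, ha, by rw [dif_pos ha]; exact hx⟩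
      · rintro ⟨a, ha, hx⟩
        rw [dif_pos ha] at hx
        exact ⟨a, ha, hx⟩
    apply Finset.sum_nbij'
      (i := fun δ' => fun ℓ (_ : ℓ ∈ δ) => δ'.filter (fun m => m ⊆ ℓ ∧ m.Nonempty))
      (j := fun p => δ.attach.biUnion (fun ℓ => p ℓ.1 ℓ.2))
    · -- hi
      intro δ' hδ'
      simp only [Finset.mem_filter, Finset.mem_univ, true_and] at hδ'
      obtain ⟨c, hc, hcb⟩ := hδ'
      subst hcb
      apply Finset.mem_pi.mpr
      intro ℓ h
      rw [filter_biUnion_choice ρ hne hdisj hc h]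
      simp only [Finset.mem_filter, Finset.mem_univ, true_and]
      exact hc ℓ h
    · -- hj
      intro p hp
      simp only [Finset.mem_filter, Finset.mem_univ, true_and]
      rw [hjglue p]
      refine ⟨fun ℓ => if h : ℓ ∈ δ then p ℓ h else {ℓ}, ?_, rfl⟩
      intro ℓ h
      have := hjmem p hp ℓ h
      simp only [dif_pos h]
      exact this
    · -- left inverse
      intro δ' hδ'
      simp only [Finset.mem_filter, Finset.mem_univ, true_and] at hδ'
      obtain ⟨c, hc, hcb⟩ := hδ'
      subst hcb
      rw [Finset.biUnion_congr rfl (fun ℓ _ => filter_biUnion_choice ρ hne hdisj hc ℓ.2)]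
      ext x
      simp only [Finset.mem_biUnion, Finset.mem_attach, true_and, Subtype.exists]
      constructor
      · rintro ⟨a, ha, hx⟩; exact ⟨a, ha, hx⟩
      · rintro ⟨a, ha, hx⟩; exact ⟨a, ha, hx⟩
    · -- right inverse
      intro p hp
      funext ℓ
      funext h
      rw [hjglue p]
      have hc : ∀ ℓ ∈ δ, choicePred ρ ℓ ((fun ℓ => if h : ℓ ∈ δ then p ℓ h else {ℓ}) ℓ) := by
        intro ℓ' h'
        simp only [dif_pos h']
        exact hjmem p hp ℓ' h'
      rw [filter_biUnion_choice ρ hne hdisj hc h]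
      simp only [dif_pos h]
    · -- values
      intro δ' hδ'
      simp only [Finset.mem_filter, Finset.mem_univ, true_and] at hδ'
      obtain ⟨c, hc, hcb⟩ := hδ'
      subst hcb
      rw [Pmat_value ρ hne hdisj hc]
      rw [← Finset.prod_attach δ (fun ℓ => ∑ m ∈ c ℓ, rhoC ρ ℓ m)]
      apply Finset.prod_congr rfl
      intro ℓ _
      simp only [filter_biUnion_choice ρ hne hdisj hc ℓ.2]
  rw [hbij, ← Finset.prod_sum δ (fun ℓ => univ.filter (choicePred ρ ℓ))
    (fun ℓ s => ∑ m ∈ s, rhoC ρ ℓ m)]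
  apply Finset.prod_eq_one
  intro ℓ _
  exact choice_sum_one ρ hρ ℓ

end RowStoch3
/-- Lemma 5.1: the matrix `P` is row-stochastic on the leaf partitions. -/
theorem Pmat_row_stochastic {I : Type u} [Fintype I] [DecidableEq I]
    (ρ : Finset I → ℝ) (hρ : IsProbVec ρ)
    (δ : Finset (Finset I)) (hδ : LeafPartAny ρ δ) :
    ∑ δ' : Finset (Finset I), Pmat ρ δ δ' = 1 := by
  obtain ⟨n, T, hT, hTδ⟩ := hδ
  obtain ⟨hne0, hdisj0⟩ := tree_leaves ρ hρ hT
  apply sum_Pmat_eq_one ρ hρ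
  · intro ℓ hℓ
    rw [← hTδ] at hℓ
    obtain ⟨b, hb, rfl⟩ := Finset.mem_image.mp hℓ
    exact hne0 b hb
  · intro ℓ hℓ ℓ' hℓ' hnell
    rw [← hTδ] at hℓ hℓ'
    obtain ⟨b, hb, rfl⟩ := Finset.mem_image.mp hℓ
    obtain ⟨b', hb', rfl⟩ := Finset.mem_image.mp hℓ'
    exact hdisj0 b hb b' hb' (fun h => hnell (by rw [h]))
end

section
/- The vector φ = (φ_δ : δ ∈ ∂(𝒯), δ ≠ 𝒟^ρ) defined by φ_δ = E_δ(η^{−ζ^ℰ}, ζ^ℰ < ∞) is a right eigenvector of the restriction P* of P to the non-absorbing states, with eigenvalue η: for every δ ≠ 𝒟^ρ, ∑_{δ'≠𝒟^ρ} P_{δ,δ'} φ_{δ'} = η φ_δ. -/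
open scoped Classical
open Finset

universe u

set_option linter.unusedSectionVars false
set_option linter.unusedVariables false
section AuxProof
variable {I : Type u} [Fintype I] [DecidableEq I]

lemma rhoC_self_def (ρ : Finset I → ℝ) (K : Finset I) :
    rhoC ρ K K =
      ∑ J ∈ univ.filter (fun J : Finset I => 0 < ρ J ∧ (J ∩ K = K ∨ J ∩ K = ∅)), ρ J := by
  simp [rhoC]

lemma rhoC_nonneg (ρ : Finset I → ℝ) (hρ : ∀ J, 0 ≤ ρ J) (K M : Finset I) :
    0 ≤ rhoC ρ K M := by
  unfold rhoC; split <;> exact Finset.sum_nonneg fun J _ => hρ J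

lemma sum_rho_le_one {ρ : Finset I → ℝ} (hρ : IsProbVec ρ) (s : Finset (Finset I)) :
    ∑ J ∈ s, ρ J ≤ 1 := by
  rw [← hρ.2.2]
  exact Finset.sum_le_sum_of_subset_of_nonneg (Finset.subset_univ s)
    (fun J _ _ => hρ.2.1 J)

lemma rhoC_self_le_one {ρ : Finset I → ℝ} (hρ : IsProbVec ρ) (K : Finset I) :
    rhoC ρ K K ≤ 1 := by
  rw [rhoC_self_def]; exact sum_rho_le_one hρ _

lemma isAtomD_rhoC {ρ : Finset I → ℝ} (hρ : IsProbVec ρ) {L : Finset I}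
    (h : isAtomD ρ L) : rhoC ρ L L = 1 := by
  rw [rhoC_self_def, ← hρ.2.2]
  apply Finset.sum_filter_of_ne
  intro J _ hJ
  have hJpos : 0 < ρ J := lt_of_le_of_ne (hρ.2.1 J) (Ne.symm hJ)
  exact ⟨hJpos, h.2 J hJpos⟩

lemma inY_nonempty {ρ : Finset I → ℝ} (hρ : IsProbVec ρ) {K : Finset I}
    (h : inY ρ K) : K.Nonempty := by
  induction h with
  | base J hJ =>
    rcases Finset.eq_empty_or_nonempty J with h | h
    · subst h; rw [hρ.1] at hJ; exact absurd hJ (lt_irrefl 0)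
    · exact h
  | inter K J _ _ hne _ => exact hne

lemma inY_exists_good {ρ : Finset I → ℝ} {K : Finset I} (h : inY ρ K) :
    ∃ J, 0 < ρ J ∧ (J ∩ K = K ∨ J ∩ K = ∅) := by
  cases h with
  | base J hJ => exact ⟨K, hJ, Or.inl (Finset.inter_self K)⟩
  | inter K' J hK hJ hne =>
      refine ⟨J, hJ, Or.inl ?_⟩
      ext x
      simp only [Finset.mem_inter]
      tauto

lemma rhoC_self_pos {ρ : Finset I → ℝ} (hρ : IsProbVec ρ) {K : Finset I}
    (h : inY ρ K) : 0 < rhoC ρ K K := by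
  rw [rhoC_self_def]
  obtain ⟨J, hJ, hc⟩ := inY_exists_good h
  refine lt_of_lt_of_le hJ (Finset.single_le_sum (fun J _ => hρ.2.1 J) ?_)
  simp only [Finset.mem_filter, Finset.mem_univ, true_and]
  exact ⟨hJ, hc⟩

lemma rhoC_self_le_one_sub {ρ : Finset I → ℝ} (hρ : IsProbVec ρ) {K J : Finset I}
    (hJ : 0 < ρ J) (hsplit : ¬(J ∩ K = K ∨ J ∩ K = ∅)) : rhoC ρ K K ≤ 1 - ρ J := by
  rw [rhoC_self_def]
  have h1 : ∑ J' ∈ (univ : Finset (Finset I)).erase J, ρ J' = 1 - ρ J := by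
    rw [Finset.sum_erase_eq_sub (Finset.mem_univ J), hρ.2.2]
  rw [← h1]
  refine Finset.sum_le_sum_of_subset_of_nonneg ?_ (fun J' _ _ => hρ.2.1 J')
  intro J' hJ'
  simp only [Finset.mem_filter, Finset.mem_univ, true_and] at hJ'
  refine Finset.mem_erase.mpr ⟨?_, Finset.mem_univ _⟩
  rintro rfl; exact hsplit hJ'.2

lemma rhoC_filter_subset {K L : Finset I} (hKL : K ⊆ L) :
    ∀ J' : Finset I, (J' ∩ L = L ∨ J' ∩ L = ∅) → (J' ∩ K = K ∨ J' ∩ K = ∅) := by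
  intro J' h
  rcases h with h | h
  · left
    have hL : L ⊆ J' := by rw [← h]; exact Finset.inter_subset_left
    exact Finset.inter_eq_right.mpr (hKL.trans hL)
  · right
    have : J' ∩ K ⊆ J' ∩ L := Finset.inter_subset_inter (le_refl J') hKL
    rw [h] at this
    exact Finset.subset_empty.mp this

lemma rhoC_self_mono {ρ : Finset I → ℝ} (hρ : IsProbVec ρ) {K L : Finset I}
    (hKL : K ⊆ L) : rhoC ρ L L ≤ rhoC ρ K K := by
  rw [rhoC_self_def, rhoC_self_def]
  refine Finset.sum_le_sum_of_subset_of_nonneg ?_ (fun J' _ _ => hρ.2.1 J')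
  intro J' hJ'
  simp only [Finset.mem_filter, Finset.mem_univ, true_and] at hJ' ⊢
  exact ⟨hJ'.1, rhoC_filter_subset hKL J' hJ'.2⟩

lemma rhoC_gap {ρ : Finset I → ℝ} (hρ : IsProbVec ρ) {K L J : Finset I}
    (hKL : K ⊆ L) (hJ : 0 < ρ J) (hJK : J ∩ K = K ∨ J ∩ K = ∅)
    (hJL : ¬(J ∩ L = L ∨ J ∩ L = ∅)) : rhoC ρ L L + ρ J ≤ rhoC ρ K K := by
  have hJnot : J ∉ (univ : Finset (Finset I)).filter
      (fun J' : Finset I => 0 < ρ J' ∧ (J' ∩ L = L ∨ J' ∩ L = ∅)) := by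
    simp only [Finset.mem_filter, Finset.mem_univ, true_and, not_and]
    exact fun _ => hJL
  have hsub : insert J ((univ : Finset (Finset I)).filter
      (fun J' : Finset I => 0 < ρ J' ∧ (J' ∩ L = L ∨ J' ∩ L = ∅))) ⊆
      (univ : Finset (Finset I)).filter
      (fun J' : Finset I => 0 < ρ J' ∧ (J' ∩ K = K ∨ J' ∩ K = ∅)) := by
    intro J' hJ'
    rcases Finset.mem_insert.mp hJ' with rfl | hJ'
    · simp only [Finset.mem_filter, Finset.mem_univ, true_and]; exact ⟨hJ, hJK⟩
    · simp only [Finset.mem_filter, Finset.mem_univ, true_and] at hJ' ⊢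
      exact ⟨hJ'.1, rhoC_filter_subset hKL J' hJ'.2⟩
  have h2 : ρ J + rhoC ρ L L ≤ rhoC ρ K K := by
    rw [rhoC_self_def, rhoC_self_def, ← Finset.sum_insert (f := ρ) hJnot]
    exact Finset.sum_le_sum_of_subset_of_nonneg hsub (fun J' _ _ => hρ.2.1 J')
  linarith

end AuxProof
section AuxProof2
variable {I : Type u} [Fintype I] [DecidableEq I]

/-- The set appearing in the hypothesis on `η`. -/
def etaSet (ρ : Finset I → ℝ) : Set ℝ :=
  {x : ℝ | ∃ K : Finset I, inY ρ K ∧ ¬ isAtomD ρ K ∧ x = rhoC ρ K K}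

lemma eta_pos {ρ : Finset I → ℝ} {η : ℝ} (hρ : IsProbVec ρ)
    (hη : IsGreatest (etaSet ρ) η) : 0 < η := by
  obtain ⟨K, hKY, -, rfl⟩ := hη.1
  exact rhoC_self_pos hρ hKY

lemma not_atom_splitter {ρ : Finset I → ℝ} {K : Finset I} (hKY : inY ρ K)
    (hKa : ¬ isAtomD ρ K) : ∃ J, 0 < ρ J ∧ ¬(J ∩ K = K ∨ J ∩ K = ∅) := by
  by_contra h
  push_neg at h
  exact hKa ⟨hKY, h⟩

lemma eta_lt_one {ρ : Finset I → ℝ} {η : ℝ} (hρ : IsProbVec ρ)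
    (hη : IsGreatest (etaSet ρ) η) : η < 1 := by
  obtain ⟨K, hKY, hKa, rfl⟩ := hη.1
  obtain ⟨J, hJ, hs⟩ := not_atom_splitter hKY hKa
  have := rhoC_self_le_one_sub hρ hJ hs
  linarith

lemma le_eta {ρ : Finset I → ℝ} {η : ℝ} (hη : IsGreatest (etaSet ρ) η)
    {K : Finset I} (hKY : inY ρ K) (hKa : ¬ isAtomD ρ K) : rhoC ρ K K ≤ η :=
  hη.2 ⟨K, hKY, hKa, rfl⟩

lemma atom_inter {ρ : Finset I → ℝ} {L K : Finset I} (hL : isAtomD ρ L)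
    (hK : inY ρ K) : L ∩ K = L ∨ L ∩ K = ∅ := by
  induction hK with
  | base J hJ =>
    rw [Finset.inter_comm]
    exact hL.2 _ hJ
  | inter K' J hK' hJ hne ih =>
    rw [← Finset.inter_assoc]
    rcases ih with h | h
    · rw [h, Finset.inter_comm]
      exact hL.2 _ hJ
    · rw [h]; right; exact Finset.empty_inter J

lemma atom_disjoint {ρ : Finset I → ℝ} {L₁ L₂ : Finset I} (h1 : isAtomD ρ L₁)
    (h2 : isAtomD ρ L₂) (hne : L₁ ≠ L₂) : L₁ ∩ L₂ = ∅ := by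
  rcases atom_inter h1 h2.1 with ha | ha
  · rcases atom_inter h2 h1.1 with hb | hb
    · exfalso
      apply hne
      have : L₁ ⊆ L₂ := ha ▸ Finset.inter_subset_right
      have : L₂ ⊆ L₁ := by rw [Finset.inter_comm] at hb; exact hb ▸ Finset.inter_subset_left
      exact Finset.Subset.antisymm (ha ▸ Finset.inter_subset_right) this
    · rw [Finset.inter_comm] at hb; exact hb
  · exact ha

lemma inY_exists_inf {ρ : Finset I → ℝ} {K : Finset I} (h : inY ρ K) :
    ∃ s : Finset (Finset I), s.Nonempty ∧ (∀ J ∈ s, 0 < ρ J) ∧ K = s.inf id := by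
  induction h with
  | base J hJ =>
    exact ⟨{J}, Finset.singleton_nonempty J, by simpa using hJ, by simp⟩
  | inter K' J hK' hJ hne ih =>
    obtain ⟨s, hsne, hspos, hinf⟩ := ih
    refine ⟨insert J s, Finset.insert_nonempty J s, ?_, ?_⟩
    · intro J' hJ'
      rcases Finset.mem_insert.mp hJ' with rfl | hJ'
      · exact hJ
      · exact hspos J' hJ'
    · rw [Finset.inf_insert, ← hinf]
      simp only [id_eq, Finset.inf_eq_inter]
      exact Finset.inter_comm K' J

lemma exists_splitter {ρ : Finset I → ℝ} (hρ : IsProbVec ρ) {L₁ L₂ ℓ : Finset I}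
    (h1 : isAtomD ρ L₁) (h2 : isAtomD ρ L₂) (hne : L₁ ≠ L₂)
    (hs1 : L₁ ⊆ ℓ) (hs2 : L₂ ⊆ ℓ) :
    ∃ J, 0 < ρ J ∧ ¬(J ∩ ℓ = ℓ ∨ J ∩ ℓ = ∅) := by
  have hdisj : L₁ ∩ L₂ = ∅ := atom_disjoint h1 h2 hne
  obtain ⟨s, hsne, hspos, hinf⟩ := inY_exists_inf h1.1
  have h2ne : L₂.Nonempty := inY_nonempty hρ h2.1
  have h1ne : L₁.Nonempty := inY_nonempty hρ h1.1
  have hJex : ∃ J ∈ s, J ∩ L₂ = ∅ := by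
    by_contra hcon
    push_neg at hcon
    have hL2sub : ∀ J ∈ s, L₂ ⊆ J := by
      intro J hJ
      rcases h2.2 J (hspos J hJ) with h | h
      · exact Finset.inter_eq_right.mp h
      · exact absurd h (Finset.nonempty_iff_ne_empty.mp (hcon J hJ))
    have : L₂ ⊆ L₁ := by
      have h3 : L₂ ≤ s.inf id := Finset.le_inf fun J hJ => hL2sub J hJ
      rw [hinf]
      exact h3
    obtain ⟨x, hx⟩ := h2ne
    have : x ∈ L₁ ∩ L₂ := Finset.mem_inter.mpr ⟨this hx, hx⟩
    rw [hdisj] at this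
    exact absurd this (Finset.notMem_empty x)
  obtain ⟨J, hJs, hJL2⟩ := hJex
  have hL1J : L₁ ⊆ J := by
    have := Finset.inf_le hJs (f := id)
    rw [← hinf] at this
    exact this
  refine ⟨J, hspos J hJs, ?_⟩
  rintro (h | h)
  · -- J ∩ ℓ = ℓ, then L₂ ⊆ J, contradicting J ∩ L₂ = ∅
    obtain ⟨x, hx⟩ := h2ne
    have hxJ : x ∈ J := by
      have : x ∈ ℓ := hs2 hx
      rw [← h] at this
      exact (Finset.mem_inter.mp this).1
    have : x ∈ J ∩ L₂ := Finset.mem_inter.mpr ⟨hxJ, hx⟩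
    rw [hJL2] at this
    exact absurd this (Finset.notMem_empty x)
  · obtain ⟨x, hx⟩ := h1ne
    have : x ∈ J ∩ ℓ := Finset.mem_inter.mpr ⟨hL1J hx, hs1 hx⟩
    rw [h] at this
    exact absurd this (Finset.notMem_empty x)

end AuxProof2
section AuxProof3
variable {I : Type u} [Fintype I] [DecidableEq I]

lemma stepRel_self (ρ : Finset I → ℝ) (δ : Finset (Finset I)) : stepRel ρ δ δ := by
  refine ⟨fun ℓ => {ℓ}, fun ℓ _ => Or.inl rfl, ?_⟩
  simp [Finset.biUnion_singleton_eq_self]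

lemma Pmat_self (ρ : Finset I → ℝ) (δ : Finset (Finset I)) :
    Pmat ρ δ δ = ∏ ℓ ∈ δ, rhoC ρ ℓ ℓ := by
  rw [Pmat, if_pos (stepRel_self ρ δ), Finset.inter_self, Finset.sdiff_self,
    Finset.prod_empty, mul_one]

lemma Pmat_nonneg {ρ : Finset I → ℝ} (hρ : IsProbVec ρ) (δ δ' : Finset (Finset I)) :
    0 ≤ Pmat ρ δ δ' := by
  rw [Pmat]
  split
  · refine mul_nonneg (Finset.prod_nonneg fun ℓ _ => rhoC_nonneg ρ hρ.2.1 ℓ ℓ)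
      (Finset.prod_nonneg fun ℓ _ => Finset.sum_nonneg fun m _ => rhoC_nonneg ρ hρ.2.1 ℓ m)
  · exact le_refl 0
  
lemma sum_rhoC_pieces_le_one {ρ : Finset I → ℝ} (hρ : IsProbVec ρ) {ℓ : Finset I}
    {δ' : Finset (Finset I)} (hℓ : ℓ ∉ δ') :
    ∑ m ∈ δ'.filter (fun m => m ⊆ ℓ ∧ m.Nonempty), rhoC ρ ℓ m ≤ 1 := by
  classical
  set s := δ'.filter (fun m => m ⊆ ℓ ∧ m.Nonempty) with hs
  have hmem : ∀ m ∈ s, m ≠ ℓ := by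
    intro m hm
    rintro rfl
    exact hℓ (Finset.mem_filter.mp hm).1
  have heq : ∀ m ∈ s, rhoC ρ ℓ m = ∑ J ∈ univ.filter (fun J : Finset I => 0 < ρ J ∧ J ∩ ℓ = m), ρ J := by
    intro m hm
    rw [rhoC, if_neg (hmem m hm)]
  rw [Finset.sum_congr rfl heq]
  rw [← Finset.sum_biUnion]
  · exact le_of_le_of_eq (Finset.sum_le_sum_of_subset_of_nonneg (Finset.subset_univ _)
      (fun J _ _ => hρ.2.1 J)) hρ.2.2
  · intro m₁ h₁ m₂ h₂ hne
    simp only [Finset.disjoint_left]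
    intro J hJ₁ hJ₂
    simp only [Finset.mem_filter, Finset.mem_univ, true_and] at hJ₁ hJ₂
    exact hne (hJ₁.2 ▸ hJ₂.2 ▸ rfl)

lemma Pmat_le_one {ρ : Finset I → ℝ} (hρ : IsProbVec ρ) (δ δ' : Finset (Finset I)) :
    Pmat ρ δ δ' ≤ 1 := by
  rw [Pmat]
  split
  · refine mul_le_one₀ ?_ (Finset.prod_nonneg fun ℓ _ => Finset.sum_nonneg fun m _ => rhoC_nonneg ρ hρ.2.1 ℓ m) ?_
    · exact Finset.prod_le_one (fun ℓ _ => rhoC_nonneg ρ hρ.2.1 ℓ ℓ)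
        (fun ℓ _ => rhoC_self_le_one hρ ℓ)
    · refine Finset.prod_le_one (fun ℓ _ => Finset.sum_nonneg fun m _ => rhoC_nonneg ρ hρ.2.1 ℓ m) ?_
      intro ℓ hℓ
      exact sum_rhoC_pieces_le_one hρ (fun hmem => (Finset.mem_sdiff.mp hℓ).2 hmem)
  · exact zero_le_one

lemma stepRel_of_Pmat_ne {ρ : Finset I → ℝ} {δ δ' : Finset (Finset I)}
    (h : Pmat ρ δ δ' ≠ 0) : stepRel ρ δ δ' := by
  by_contra hc
  rw [Pmat, if_neg hc] at h
  exact h rfl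

lemma stepRel_partition {ρ : Finset I → ℝ} {δ δ' : Finset (Finset I)}
    (hδ : IsPartitionF δ) (h : stepRel ρ δ δ') : IsPartitionF δ' := by
  obtain ⟨c, hc, rfl⟩ := h
  have hpiece : ∀ ℓ ∈ δ, ∀ x ∈ c ℓ, x ⊆ ℓ ∧ x.Nonempty := by
    intro ℓ hℓ x hx
    rcases hc ℓ hℓ with h | ⟨J, hJ, hJu, hne1, hne2, h⟩
    · rw [h, Finset.mem_singleton] at hx
      subst hx
      exact ⟨Finset.Subset.refl _, hδ.1 _ hℓ⟩
    · rw [h] at hx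
      rcases Finset.mem_insert.mp hx with rfl | hx
      · exact ⟨Finset.inter_subset_left, hne1⟩
      · rw [Finset.mem_singleton] at hx
        subst hx
        exact ⟨Finset.sdiff_subset, hne2⟩
  refine ⟨?_, ?_, ?_⟩
  · intro L hL
    obtain ⟨ℓ, hℓ, hLc⟩ := Finset.mem_biUnion.mp hL
    exact (hpiece ℓ hℓ L hLc).2
  · intro L hL L' hL' hne
    obtain ⟨ℓ, hℓ, hLc⟩ := Finset.mem_biUnion.mp hL
    obtain ⟨ℓ', hℓ', hLc'⟩ := Finset.mem_biUnion.mp hL'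
    by_cases he : ℓ = ℓ'
    · subst he
      rcases hc ℓ hℓ with h | ⟨J, hJ, hJu, hne1, hne2, h⟩
      · rw [h, Finset.mem_singleton] at hLc hLc'
        exact absurd (hLc.trans hLc'.symm) hne
      · rw [h] at hLc hLc'
        rcases Finset.mem_insert.mp hLc with rfl | hLc <;>
          rcases Finset.mem_insert.mp hLc' with rfl | hLc' <;>
          [skip; rw [Finset.mem_singleton] at hLc'; rw [Finset.mem_singleton] at hLc;
            rw [Finset.mem_singleton] at hLc hLc']
        · exact absurd rfl hne
        · subst hLc'
          ext x
          simp only [Finset.mem_inter, Finset.mem_sdiff, Finset.notMem_empty, iff_false]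
          tauto
        · subst hLc
          ext x
          simp only [Finset.mem_inter, Finset.mem_sdiff, Finset.notMem_empty, iff_false]
          tauto
        · subst hLc; subst hLc'
          exact absurd rfl hne
    · have h1 := (hpiece ℓ hℓ L hLc).1
      have h2 := (hpiece ℓ' hℓ' L' hLc').1
      have hd := hδ.2.1 ℓ hℓ ℓ' hℓ' he
      apply Finset.subset_empty.mp
      intro x hx
      rw [← hd]
      have := Finset.mem_inter.mp hx
      exact Finset.mem_inter.mpr ⟨h1 this.1, h2 this.2⟩
  · apply Finset.Subset.antisymm (Finset.subset_univ _)
    intro x _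
    have hx : x ∈ δ.biUnion id := hδ.2.2 ▸ Finset.mem_univ x
    obtain ⟨ℓ, hℓ, hxℓ⟩ := Finset.mem_biUnion.mp hx
    simp only [id] at hxℓ
    rcases hc ℓ hℓ with h | ⟨J, hJ, hJu, hne1, hne2, h⟩
    · refine Finset.mem_biUnion.mpr ⟨ℓ, Finset.mem_biUnion.mpr ⟨ℓ, hℓ, by rw [h]; exact Finset.mem_singleton_self ℓ⟩, hxℓ⟩
    · by_cases hxJ : x ∈ J
      · refine Finset.mem_biUnion.mpr ⟨ℓ ∩ J, Finset.mem_biUnion.mpr ⟨ℓ, hℓ, by rw [h]; exact Finset.mem_insert_self _ _⟩, Finset.mem_inter.mpr ⟨hxℓ, hxJ⟩⟩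
      · refine Finset.mem_biUnion.mpr ⟨ℓ \ J, Finset.mem_biUnion.mpr ⟨ℓ, hℓ, by rw [h]; exact Finset.mem_insert_of_mem (Finset.mem_singleton_self _)⟩, Finset.mem_sdiff.mpr ⟨hxℓ, hxJ⟩⟩

end AuxProof3
section AuxProof4
variable {I : Type u} [Fintype I] [DecidableEq I]

lemma partition_card_le {δ : Finset (Finset I)} (hδ : IsPartitionF δ) :
    δ.card ≤ Fintype.card I := by
  have hdisj : ∀ ℓ₁ ∈ δ, ∀ ℓ₂ ∈ δ, ℓ₁ ≠ ℓ₂ → Disjoint (id ℓ₁) (id ℓ₂) := by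
    intro ℓ₁ h₁ ℓ₂ h₂ hne
    simp only [id]
    rw [Finset.disjoint_iff_inter_eq_empty]
    exact hδ.2.1 ℓ₁ h₁ ℓ₂ h₂ hne
  have hcard := Finset.card_biUnion hdisj
  rw [hδ.2.2, Finset.card_univ] at hcard
  calc δ.card = ∑ ℓ ∈ δ, 1 := Finset.card_eq_sum_ones δ
    _ ≤ ∑ ℓ ∈ δ, (id ℓ).card := by
        refine Finset.sum_le_sum fun ℓ hℓ => ?_
        simpa [Finset.card_pos] using hδ.1 ℓ hℓ
    _ = Fintype.card I := hcard.symm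

lemma stepRel_card_lt {ρ : Finset I → ℝ} {δ δ' : Finset (Finset I)}
    (hδ : IsPartitionF δ) (h : stepRel ρ δ δ') (hne : δ' ≠ δ) : δ.card < δ'.card := by
  obtain ⟨c, hc, rfl⟩ := h
  have hsub : ∀ ℓ ∈ δ, ∀ x ∈ c ℓ, x ⊆ ℓ ∧ x.Nonempty := by
    intro ℓ hℓ x hx
    rcases hc ℓ hℓ with h | ⟨J, hJ, hJu, hne1, hne2, h⟩
    · rw [h, Finset.mem_singleton] at hx
      subst hx
      exact ⟨Finset.Subset.refl _, hδ.1 _ hℓ⟩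
    · rw [h] at hx
      rcases Finset.mem_insert.mp hx with rfl | hx
      · exact ⟨Finset.inter_subset_left, hne1⟩
      · rw [Finset.mem_singleton] at hx
        subst hx
        exact ⟨Finset.sdiff_subset, hne2⟩
  have hdisj : ∀ ℓ₁ ∈ δ, ∀ ℓ₂ ∈ δ, ℓ₁ ≠ ℓ₂ → Disjoint (c ℓ₁) (c ℓ₂) := by
    intro ℓ₁ h₁ ℓ₂ h₂ hab
    rw [Finset.disjoint_left]
    intro x hx₁ hx₂
    have hd := hδ.2.1 ℓ₁ h₁ ℓ₂ h₂ hab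
    obtain ⟨y, hy⟩ := (hsub ℓ₁ h₁ x hx₁).2
    have : y ∈ ℓ₁ ∩ ℓ₂ := Finset.mem_inter.mpr
      ⟨(hsub ℓ₁ h₁ x hx₁).1 hy, (hsub ℓ₂ h₂ x hx₂).1 hy⟩
    rw [hd] at this
    exact absurd this (Finset.notMem_empty y)
  rw [Finset.card_biUnion hdisj]
  have hex : ∃ ℓ₀ ∈ δ, c ℓ₀ ≠ {ℓ₀} := by
    by_contra hcon
    push_neg at hcon
    apply hne
    apply Finset.Subset.antisymm
    · intro x hx
      obtain ⟨ℓ, hℓ, hxc⟩ := Finset.mem_biUnion.mp hx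
      rw [hcon ℓ hℓ, Finset.mem_singleton] at hxc
      subst hxc; exact hℓ
    · intro ℓ hℓ
      exact Finset.mem_biUnion.mpr ⟨ℓ, hℓ, by rw [hcon ℓ hℓ]; exact Finset.mem_singleton_self ℓ⟩
  obtain ⟨ℓ₀, hℓ₀, hc₀⟩ := hex
  have h2 : (c ℓ₀).card = 2 := by
    rcases hc ℓ₀ hℓ₀ with h | ⟨J, hJ, hJu, hne1, hne2, h⟩
    · exact absurd h hc₀
    · rw [h]
      rw [Finset.card_insert_of_notMem, Finset.card_singleton]
      rw [Finset.mem_singleton]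
      intro heq
      obtain ⟨y, hy⟩ := hne1
      have : y ∈ ℓ₀ \ J := heq ▸ hy
      exact (Finset.mem_sdiff.mp this).2 (Finset.mem_inter.mp hy).2
  calc δ.card = ∑ ℓ ∈ δ, 1 := Finset.card_eq_sum_ones δ
    _ < ∑ ℓ ∈ δ, (c ℓ).card := by
        refine Finset.sum_lt_sum (fun ℓ hℓ => ?_) ⟨ℓ₀, hℓ₀, by omega⟩
        have : (c ℓ).Nonempty := by
          rcases hc ℓ hℓ with h | ⟨J, hJ, hJu, hne1, hne2, h⟩ <;> rw [h] <;> simp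
        simpa [Finset.card_pos] using this

lemma atom_not_splittable {ρ : Finset I → ℝ} {L J : Finset I} (hL : isAtomD ρ L)
    (hJ : 0 < ρ J) : ¬((L ∩ J).Nonempty ∧ (L \ J).Nonempty) := by
  rintro ⟨h1, h2⟩
  rcases hL.2 J hJ with h | h
  · obtain ⟨y, hy⟩ := h2
    rw [Finset.mem_sdiff] at hy
    have hLJ : L ⊆ J := by rw [← h]; exact Finset.inter_subset_left
    exact hy.2 (hLJ hy.1)
  · obtain ⟨y, hy⟩ := h1
    have : y ∈ J ∩ L := by
      rw [Finset.inter_comm]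
      exact hy
    rw [h] at this
    exact absurd this (Finset.notMem_empty y)

lemma stepRel_atoms_fixed {ρ : Finset I → ℝ} {δ δ' : Finset (Finset I)}
    (hatoms : ∀ ℓ ∈ δ, isAtomD ρ ℓ) (h : stepRel ρ δ δ') : δ' = δ := by
  obtain ⟨c, hc, rfl⟩ := h
  have hkeep : ∀ ℓ ∈ δ, c ℓ = {ℓ} := by
    intro ℓ hℓ
    rcases hc ℓ hℓ with h | ⟨J, hJ, hJu, hne1, hne2, h⟩
    · exact h
    · exact absurd ⟨hne1, hne2⟩ (atom_not_splittable (hatoms ℓ hℓ) hJ)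
  apply Finset.Subset.antisymm
  · intro x hx
    obtain ⟨ℓ, hℓ, hxc⟩ := Finset.mem_biUnion.mp hx
    rw [hkeep ℓ hℓ, Finset.mem_singleton] at hxc
    subst hxc; exact hℓ
  · intro ℓ hℓ
    exact Finset.mem_biUnion.mpr ⟨ℓ, hℓ, by rw [hkeep ℓ hℓ]; exact Finset.mem_singleton_self ℓ⟩

lemma mem_DrhoP {ρ : Finset I → ℝ} {L : Finset I} : L ∈ DrhoP ρ ↔ isAtomD ρ L := by
  simp [DrhoP]

lemma K_mem_DrhoK (ρ : Finset I → ℝ) (K : Finset I) : K ∈ DrhoK ρ K :=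
  Finset.mem_union_right _ (Finset.mem_singleton_self K)

lemma mem_DrhoK_elim {ρ : Finset I → ℝ} {K L : Finset I} (h : L ∈ DrhoK ρ K) :
    L = K ∨ (isAtomD ρ L ∧ L ∩ K = ∅) := by
  rcases Finset.mem_union.mp h with h | h
  · right; simpa using (Finset.mem_filter.mp h).2
  · left; exact Finset.mem_singleton.mp h

lemma mem_Efin {ρ : Finset I → ℝ} {η : ℝ} {δ : Finset (Finset I)} :
    δ ∈ Efin ρ η ↔ ∃ K : Finset I, inY ρ K ∧ rhoC ρ K K = η ∧ δ = DrhoK ρ K := by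
  simp [Efin]

lemma DrhoP_not_mem_Efin {ρ : Finset I → ℝ} {η : ℝ} (hρ : IsProbVec ρ) (hη1 : η < 1) :
    DrhoP ρ ∉ Efin ρ η := by
  intro h
  obtain ⟨K, hKY, hKη, hKe⟩ := mem_Efin.mp h
  have : K ∈ DrhoP ρ := hKe ▸ K_mem_DrhoK ρ K
  have hatom : isAtomD ρ K := mem_DrhoP.mp this
  rw [isAtomD_rhoC hρ hatom] at hKη
  exact absurd hKη.symm (ne_of_lt hη1)

end AuxProof4
/-- States from which `∂(𝒯)^ℰ` is reachable through positive-probability steps. -/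
inductive ReachE {I : Type u} [Fintype I] [DecidableEq I] (ρ : Finset I → ℝ) (η : ℝ) :
    Finset (Finset I) → Prop
  | mem {δ : Finset (Finset I)} : δ ∈ Efin ρ η → ReachE ρ η δ
  | step {δ δ' : Finset (Finset I)} : Pmat ρ δ δ' ≠ 0 → ReachE ρ η δ' → ReachE ρ η δ

/-- `P_δ(ζ^ℰ = j)`. -/
noncomputable def hitE {I : Type u} [Fintype I] [DecidableEq I] (ρ : Finset I → ℝ) (η : ℝ)
    (δ : Finset (Finset I)) (j : ℕ) : ℝ :=
  ∑ γ ∈ Efin ρ η, killedDist ρ η δ j γ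

section AuxProof5
variable {I : Type u} [Fintype I] [DecidableEq I]

lemma phiVec_eq (ρ : Finset I → ℝ) (η : ℝ) (δ : Finset (Finset I)) :
    phiVec ρ η δ = ∑' j : ℕ, (η ^ j)⁻¹ * hitE ρ η δ j := rfl

lemma killedDist_zero (ρ : Finset I → ℝ) (η : ℝ) (δ0 δ : Finset (Finset I)) :
    killedDist ρ η δ0 0 δ = if δ = δ0 then 1 else 0 := rfl

lemma killedDist_succ_def (ρ : Finset I → ℝ) (η : ℝ) (δ0 : Finset (Finset I)) (n : ℕ)
    (δ' : Finset (Finset I)) :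
    killedDist ρ η δ0 (n + 1) δ' =
      ∑ δ ∈ univ.filter (fun δ : Finset (Finset I) => δ ∉ Efin ρ η),
        killedDist ρ η δ0 n δ * Pmat ρ δ δ' := rfl

lemma killedDist_nonneg {ρ : Finset I → ℝ} (hρ : IsProbVec ρ) (η : ℝ)
    (δ0 : Finset (Finset I)) (n : ℕ) (δ : Finset (Finset I)) :
    0 ≤ killedDist ρ η δ0 n δ := by
  induction n generalizing δ with
  | zero => rw [killedDist_zero]; split <;> norm_num
  | succ n ih =>
    rw [killedDist_succ_def]
    exact Finset.sum_nonneg fun x _ => mul_nonneg (ih x) (Pmat_nonneg hρ x δ)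

lemma killedDist_of_mem_Efin {ρ : Finset I → ℝ} {η : ℝ} {δ0 : Finset (Finset I)}
    (h : δ0 ∈ Efin ρ η) (n : ℕ) (δ : Finset (Finset I)) :
    killedDist ρ η δ0 (n + 1) δ = 0 := by
  induction n generalizing δ with
  | zero =>
    rw [killedDist_succ_def]
    refine Finset.sum_eq_zero fun x hx => ?_
    rw [killedDist_zero]
    have hxE := (Finset.mem_filter.mp hx).2
    rw [if_neg, zero_mul]
    rintro rfl
    exact hxE h
  | succ n ih =>
    rw [killedDist_succ_def]
    exact Finset.sum_eq_zero fun x hx => by rw [ih x, zero_mul]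

lemma killedDist_succ {ρ : Finset I → ℝ} {η : ℝ} {δ0 : Finset (Finset I)}
    (h : δ0 ∉ Efin ρ η) (n : ℕ) (γ : Finset (Finset I)) :
    killedDist ρ η δ0 (n + 1) γ =
      ∑ δ' : Finset (Finset I), Pmat ρ δ0 δ' * killedDist ρ η δ' n γ := by
  induction n generalizing γ with
  | zero =>
    rw [killedDist_succ_def]
    rw [Finset.sum_eq_single_of_mem δ0 (Finset.mem_filter.mpr ⟨Finset.mem_univ _, h⟩)]
    · rw [killedDist_zero, if_pos rfl, one_mul]
      simp [killedDist_zero]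
    · intro δ hδ hne
      rw [killedDist_zero, if_neg hne, zero_mul]
  | succ n ih =>
    rw [killedDist_succ_def]
    have step1 : ∀ δ ∈ univ.filter (fun δ : Finset (Finset I) => δ ∉ Efin ρ η),
        killedDist ρ η δ0 (n + 1) δ * Pmat ρ δ γ =
        ∑ δ' : Finset (Finset I), Pmat ρ δ0 δ' * killedDist ρ η δ' n δ * Pmat ρ δ γ := by
      intro δ hδ
      rw [ih δ, Finset.sum_mul]
    rw [Finset.sum_congr rfl step1, Finset.sum_comm]
    refine Finset.sum_congr rfl fun δ' _ => ?_
    rw [killedDist_succ_def, Finset.mul_sum]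
    exact Finset.sum_congr rfl fun δ hδ => by ring

lemma hitE_nonneg {ρ : Finset I → ℝ} (hρ : IsProbVec ρ) (η : ℝ)
    (δ : Finset (Finset I)) (j : ℕ) : 0 ≤ hitE ρ η δ j :=
  Finset.sum_nonneg fun γ _ => killedDist_nonneg hρ η δ j γ

lemma hitE_zero (ρ : Finset I → ℝ) (η : ℝ) (δ : Finset (Finset I)) :
    hitE ρ η δ 0 = if δ ∈ Efin ρ η then 1 else 0 := by
  rw [hitE]
  rw [Finset.sum_congr rfl (fun γ _ => killedDist_zero ρ η δ γ)]
  exact Finset.sum_ite_eq' (Efin ρ η) δ (fun _ => (1 : ℝ))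

lemma hitE_succ_of_mem {ρ : Finset I → ℝ} {η : ℝ} {δ : Finset (Finset I)}
    (h : δ ∈ Efin ρ η) (j : ℕ) : hitE ρ η δ (j + 1) = 0 := by
  rw [hitE]
  exact Finset.sum_eq_zero fun γ _ => killedDist_of_mem_Efin h j γ

lemma hitE_succ {ρ : Finset I → ℝ} {η : ℝ} {δ : Finset (Finset I)}
    (h : δ ∉ Efin ρ η) (j : ℕ) :
    hitE ρ η δ (j + 1) = ∑ δ' : Finset (Finset I), Pmat ρ δ δ' * hitE ρ η δ' j := by
  rw [hitE, Finset.sum_congr rfl (fun γ _ => killedDist_succ h j γ), Finset.sum_comm]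
  exact Finset.sum_congr rfl fun δ' _ => by rw [hitE, Finset.mul_sum]

lemma reach_of_hitE_ne_zero {ρ : Finset I → ℝ} {η : ℝ} :
    ∀ (j : ℕ) {δ : Finset (Finset I)}, hitE ρ η δ j ≠ 0 → ReachE ρ η δ := by
  intro j
  induction j with
  | zero =>
    intro δ h
    rw [hitE_zero] at h
    by_cases hE : δ ∈ Efin ρ η
    · exact ReachE.mem hE
    · rw [if_neg hE] at h; exact absurd rfl h
  | succ j ih =>
    intro δ h
    by_cases hE : δ ∈ Efin ρ η
    · exact ReachE.mem hE
    · rw [hitE_succ hE] at h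
      obtain ⟨δ', -, hne⟩ := Finset.exists_ne_zero_of_sum_ne_zero h
      exact ReachE.step (left_ne_zero_of_mul hne) (ih (right_ne_zero_of_mul hne))

lemma hitE_eq_zero_of_not_reach {ρ : Finset I → ℝ} {η : ℝ} {δ : Finset (Finset I)}
    (h : ¬ ReachE ρ η δ) (j : ℕ) : hitE ρ η δ j = 0 := by
  by_contra hc
  exact h (reach_of_hitE_ne_zero j hc)

end AuxProof5
section AuxProof6
variable {I : Type u} [Fintype I] [DecidableEq I]

lemma killedDist_DrhoP {ρ : Finset I → ℝ} {η : ℝ} (hρ : IsProbVec ρ) (hη1 : η < 1)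
    (n : ℕ) (γ : Finset (Finset I)) :
    killedDist ρ η (DrhoP ρ) n γ = if γ = DrhoP ρ then 1 else 0 := by
  have hD : DrhoP ρ ∉ Efin ρ η := DrhoP_not_mem_Efin hρ hη1
  have hPD : ∀ γ : Finset (Finset I), Pmat ρ (DrhoP ρ) γ = if γ = DrhoP ρ then 1 else 0 := by
    intro γ
    by_cases hγ : γ = DrhoP ρ
    · subst hγ
      rw [if_pos rfl, Pmat_self]
      refine Finset.prod_eq_one fun L hL => isAtomD_rhoC hρ (mem_DrhoP.mp hL)
    · rw [if_neg hγ, Pmat]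
      rw [if_neg]
      intro hstep
      exact hγ (stepRel_atoms_fixed (fun L hL => mem_DrhoP.mp hL) hstep)
  induction n with
  | zero => exact killedDist_zero ρ η _ γ
  | succ n ih =>
    rw [killedDist_succ hD, Finset.sum_congr rfl (fun δ' _ => by rw [hPD δ'])]
    simp only [ite_mul, one_mul, zero_mul]
    rw [Finset.sum_ite_eq' (univ : Finset (Finset (Finset I))) (DrhoP ρ)
      (fun δ' => killedDist ρ η δ' n γ)]
    rw [if_pos (Finset.mem_univ _)]
    exact ih

lemma hitE_DrhoP {ρ : Finset I → ℝ} {η : ℝ} (hρ : IsProbVec ρ) (hη1 : η < 1) (j : ℕ) :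
    hitE ρ η (DrhoP ρ) j = 0 := by
  rw [hitE, Finset.sum_congr rfl (fun γ _ => killedDist_DrhoP hρ hη1 j γ)]
  rw [Finset.sum_ite_eq' (Efin ρ η) (DrhoP ρ) (fun _ => (1:ℝ))]
  exact if_neg (DrhoP_not_mem_Efin hρ hη1)

lemma phiVec_DrhoP {ρ : Finset I → ℝ} {η : ℝ} (hρ : IsProbVec ρ) (hη1 : η < 1) :
    phiVec ρ η (DrhoP ρ) = 0 := by
  rw [phiVec_eq]
  have : ∀ j : ℕ, (η ^ j)⁻¹ * hitE ρ η (DrhoP ρ) j = 0 := fun j => by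
    rw [hitE_DrhoP hρ hη1, mul_zero]
  rw [tsum_congr this, tsum_zero]

/-- `ℓ` is a union of atoms. -/
def UAtoms (ρ : Finset I → ℝ) (ℓ : Finset I) : Prop :=
  ∀ i ∈ ℓ, ∃ L, isAtomD ρ L ∧ i ∈ L ∧ L ⊆ ℓ

lemma reach_struct {ρ : Finset I → ℝ} {η : ℝ} (hρ : IsProbVec ρ)
    {δ : Finset (Finset I)} (hR : ReachE ρ η δ) : IsPartitionF δ →
    ∃ K ℓs : Finset I, inY ρ K ∧ rhoC ρ K K = η ∧ ℓs ∈ δ ∧ K ⊆ ℓs ∧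
      (∀ ℓ ∈ δ, ℓ ≠ ℓs → UAtoms ρ ℓ) ∧
      (ℓs ≠ K → ∃ J, 0 < ρ J ∧ (J ∩ K = K ∨ J ∩ K = ∅) ∧ ¬(J ∩ ℓs = ℓs ∨ J ∩ ℓs = ∅)) := by
  induction hR with
  | @mem δ hE =>
    intro hδ
    obtain ⟨K, hKY, hKη, rfl⟩ := mem_Efin.mp hE
    refine ⟨K, K, hKY, hKη, K_mem_DrhoK ρ K, Finset.Subset.refl K, ?_, fun h => absurd rfl h⟩
    intro ℓ hℓ hne
    rcases mem_DrhoK_elim hℓ with rfl | ⟨hatom, -⟩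
    · exact absurd rfl hne
    · exact fun i hi => ⟨ℓ, hatom, hi, Finset.Subset.refl ℓ⟩
  | @step δ δ' hP hR' ih =>
    intro hδ
    have hstep : stepRel ρ δ δ' := stepRel_of_Pmat_ne hP
    have hδ' : IsPartitionF δ' := stepRel_partition hδ hstep
    obtain ⟨K, ℓs', hKY, hKη, hℓs'δ', hKsub', hUA', hJ'⟩ := ih hδ'
    obtain ⟨c, hc, hδ'e⟩ := hstep
    have hℓs'c : ∃ ℓh ∈ δ, ℓs' ∈ c ℓh := by
      rw [hδ'e] at hℓs'δ'
      exact Finset.mem_biUnion.mp hℓs'δ'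
    obtain ⟨ℓh, hℓhδ, hℓs'mem⟩ := hℓs'c
    have hpiece : ∀ ℓ ∈ δ, ∀ x ∈ c ℓ, x ⊆ ℓ ∧ x.Nonempty := by
      intro ℓ hℓ x hx
      rcases hc ℓ hℓ with h | ⟨J, hJ, hJu, hne1, hne2, h⟩
      · rw [h, Finset.mem_singleton] at hx
        subst hx
        exact ⟨Finset.Subset.refl _, hδ.1 _ hℓ⟩
      · rw [h] at hx
        rcases Finset.mem_insert.mp hx with rfl | hx
        · exact ⟨Finset.inter_subset_left, hne1⟩
        · rw [Finset.mem_singleton] at hx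
          subst hx
          exact ⟨Finset.sdiff_subset, hne2⟩
    have hℓs'sub : ℓs' ⊆ ℓh := (hpiece ℓh hℓhδ ℓs' hℓs'mem).1
    -- all blocks of δ other than ℓh are unions of atoms
    have hUA : ∀ ℓ ∈ δ, ℓ ≠ ℓh → UAtoms ρ ℓ := by
      intro ℓ hℓ hne i hi
      have hxUA : ∀ x ∈ c ℓ, UAtoms ρ x := by
        intro x hx
        refine hUA' x ?_ ?_
        · rw [hδ'e]; exact Finset.mem_biUnion.mpr ⟨ℓ, hℓ, hx⟩
        · rintro rfl
          obtain ⟨y, hy⟩ := (hpiece ℓ hℓ _ hx).2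
          have hyℓh : y ∈ ℓh := hℓs'sub hy
          have hyℓ : y ∈ ℓ := (hpiece ℓ hℓ _ hx).1 hy
          have hd := hδ.2.1 ℓ hℓ ℓh hℓhδ hne
          have : y ∈ ℓ ∩ ℓh := Finset.mem_inter.mpr ⟨hyℓ, hyℓh⟩
          rw [hd] at this
          exact absurd this (Finset.notMem_empty y)
      rcases hc ℓ hℓ with h | ⟨J, hJ, hJu, hne1, hne2, h⟩
      · obtain ⟨L, hL, hiL, hLsub⟩ := hxUA ℓ (by rw [h]; exact Finset.mem_singleton_self ℓ) i hi
        exact ⟨L, hL, hiL, hLsub⟩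
      · by_cases hiJ : i ∈ J
        · obtain ⟨L, hL, hiL, hLsub⟩ := hxUA (ℓ ∩ J)
            (by rw [h]; exact Finset.mem_insert_self _ _) i (Finset.mem_inter.mpr ⟨hi, hiJ⟩)
          exact ⟨L, hL, hiL, hLsub.trans Finset.inter_subset_left⟩
        · obtain ⟨L, hL, hiL, hLsub⟩ := hxUA (ℓ \ J)
            (by rw [h]; exact Finset.mem_insert_of_mem (Finset.mem_singleton_self _))
            i (Finset.mem_sdiff.mpr ⟨hi, hiJ⟩)
          exact ⟨L, hL, hiL, hLsub.trans Finset.sdiff_subset⟩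
    refine ⟨K, ℓh, hKY, hKη, hℓhδ, hKsub'.trans hℓs'sub, hUA, ?_⟩
    intro hℓhK
    rcases hc ℓh hℓhδ with h | ⟨J, hJ, hJu, hne1, hne2, h⟩
    · -- kept: ℓs' = ℓh
      rw [h, Finset.mem_singleton] at hℓs'mem
      subst hℓs'mem
      exact hJ' hℓhK
    · -- split
      rw [h] at hℓs'mem
      refine ⟨J, hJ, ?_, ?_⟩
      · rcases Finset.mem_insert.mp hℓs'mem with rfl | hx
        · left
          have : K ⊆ J := hKsub'.trans Finset.inter_subset_right
          exact Finset.inter_eq_right.mpr this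
        · rw [Finset.mem_singleton] at hx
          subst hx
          right
          apply Finset.eq_empty_of_forall_notMem
          intro y hy
          have hyK := (Finset.mem_inter.mp hy).2
          have := hKsub' hyK
          exact (Finset.mem_sdiff.mp this).2 (Finset.mem_inter.mp hy).1
      · rintro (hh | hh)
        · obtain ⟨y, hy⟩ := hne2
          have hyℓh : y ∈ ℓh := (Finset.mem_sdiff.mp hy).1
          rw [← hh] at hyℓh
          exact (Finset.mem_sdiff.mp hy).2 (Finset.mem_inter.mp hyℓh).1
        · obtain ⟨y, hy⟩ := hne1
          have : y ∈ J ∩ ℓh := Finset.mem_inter.mpr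
            ⟨(Finset.mem_inter.mp hy).2, (Finset.mem_inter.mp hy).1⟩
          rw [hh] at this
          exact absurd this (Finset.notMem_empty y)

lemma selfloop_lt_eta {ρ : Finset I → ℝ} {η : ℝ} (hρ : IsProbVec ρ)
    (hη : IsGreatest (etaSet ρ) η) {δ : Finset (Finset I)} (hR : ReachE ρ η δ)
    (hδ : IsPartitionF δ) (hE : δ ∉ Efin ρ η) : Pmat ρ δ δ < η := by
  have hη0 : 0 < η := eta_pos hρ hη
  have hη1 : η < 1 := eta_lt_one hρ hη
  obtain ⟨K, ℓs, hKY, hKη, hℓsδ, hKsub, hUA, hJc⟩ := reach_struct hρ hR hδ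
  have hprod_le : ∀ ℓ' ∈ δ, ∀ b : ℝ, rhoC ρ ℓ' ℓ' ≤ b → 0 ≤ b → Pmat ρ δ δ ≤ b := by
    intro ℓ' hℓ' b hb hb0
    rw [Pmat_self, ← Finset.mul_prod_erase δ _ hℓ']
    have h1 : ∏ ℓ ∈ δ.erase ℓ', rhoC ρ ℓ ℓ ≤ 1 :=
      Finset.prod_le_one (fun ℓ _ => rhoC_nonneg ρ hρ.2.1 ℓ ℓ)
        (fun ℓ _ => rhoC_self_le_one hρ ℓ)
    have h2 : 0 ≤ ∏ ℓ ∈ δ.erase ℓ', rhoC ρ ℓ ℓ :=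
      Finset.prod_nonneg fun ℓ _ => rhoC_nonneg ρ hρ.2.1 ℓ ℓ
    calc rhoC ρ ℓ' ℓ' * ∏ ℓ ∈ δ.erase ℓ', rhoC ρ ℓ ℓ
        ≤ rhoC ρ ℓ' ℓ' * 1 := by
          refine mul_le_mul_of_nonneg_left h1 (rhoC_nonneg ρ hρ.2.1 ℓ' ℓ')
      _ = rhoC ρ ℓ' ℓ' := mul_one _
      _ ≤ b := hb
  by_cases hℓsK : ℓs = K
  · subst hℓsK
    -- ℓs = K is a block of δ; find a non-atom block ≠ K
    have hex : ∃ ℓ' ∈ δ, ℓ' ≠ ℓs ∧ ¬ isAtomD ρ ℓ' := by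
      by_contra hcon
      push_neg at hcon
      apply hE
      rw [mem_Efin]
      refine ⟨ℓs, hKY, hKη, ?_⟩
      -- δ = DrhoK ρ ℓs
      apply Finset.Subset.antisymm
      · intro L hL
        by_cases hLK : L = ℓs
        · subst hLK; exact K_mem_DrhoK ρ L
        · refine Finset.mem_union_left _ (Finset.mem_filter.mpr
            ⟨Finset.mem_univ _, hcon L hL hLK, hδ.2.1 L hL ℓs hℓsδ hLK⟩)
      · intro L hL
        rcases mem_DrhoK_elim hL with rfl | ⟨hatom, hdisj⟩
        · exact hℓsδ
        · obtain ⟨i, hi⟩ := inY_nonempty hρ hatom.1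
          have hiu : i ∈ δ.biUnion id := hδ.2.2 ▸ Finset.mem_univ i
          obtain ⟨ℓ, hℓ, hiℓ⟩ := Finset.mem_biUnion.mp hiu
          simp only [id] at hiℓ
          by_cases hℓK : ℓ = ℓs
          · subst hℓK
            exfalso
            have : i ∈ L ∩ ℓ := Finset.mem_inter.mpr ⟨hi, hiℓ⟩
            rw [hdisj] at this
            exact absurd this (Finset.notMem_empty i)
          · have hℓatom := hcon ℓ hℓ hℓK
            by_cases hLℓ : L = ℓ
            · subst hLℓ; exact hℓ
            · exfalso
              have := atom_disjoint hatom hℓatom hLℓ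
              have hmem : i ∈ L ∩ ℓ := Finset.mem_inter.mpr ⟨hi, hiℓ⟩
              rw [this] at hmem
              exact absurd hmem (Finset.notMem_empty i)
    obtain ⟨ℓ', hℓ'δ, hℓ'ne, hℓ'na⟩ := hex
    -- ℓ' is a union of at least two atoms, hence has a splitter
    have hUAℓ' := hUA ℓ' hℓ'δ hℓ'ne
    obtain ⟨i, hi⟩ := hδ.1 ℓ' hℓ'δ
    obtain ⟨L₁, hL₁, hiL₁, hL₁sub⟩ := hUAℓ' i hi
    have hL₁ne : L₁ ≠ ℓ' := fun h => hℓ'na (h ▸ hL₁)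
    have hssub : L₁ ⊂ ℓ' := Finset.ssubset_iff_subset_ne.mpr ⟨hL₁sub, hL₁ne⟩
    obtain ⟨i₂, hi₂ℓ', hi₂L₁⟩ := Finset.exists_of_ssubset hssub
    obtain ⟨L₂, hL₂, hiL₂, hL₂sub⟩ := hUAℓ' i₂ hi₂ℓ'
    have hL₁₂ : L₁ ≠ L₂ := fun h => hi₂L₁ (h ▸ hiL₂)
    obtain ⟨J', hJ', hJ's⟩ := exists_splitter hρ hL₁ hL₂ hL₁₂ hL₁sub hL₂sub
    have hbound : rhoC ρ ℓ' ℓ' ≤ 1 - ρ J' := rhoC_self_le_one_sub hρ hJ' hJ's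
    -- Pmat δ δ ≤ rhoC K K * rhoC ℓ' ℓ' ≤ η * (1 - ρ J') < η
    have hKδ : ℓs ∈ δ := hℓsδ
    have key : Pmat ρ δ δ ≤ η * (1 - ρ J') := by
      rw [Pmat_self, ← Finset.mul_prod_erase δ _ hKδ]
      have hℓ'mem : ℓ' ∈ δ.erase ℓs := Finset.mem_erase.mpr ⟨hℓ'ne, hℓ'δ⟩
      rw [← Finset.mul_prod_erase _ _ hℓ'mem]
      have h3 : ∏ ℓ ∈ (δ.erase ℓs).erase ℓ', rhoC ρ ℓ ℓ ≤ 1 :=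
        Finset.prod_le_one (fun ℓ _ => rhoC_nonneg ρ hρ.2.1 ℓ ℓ)
          (fun ℓ _ => rhoC_self_le_one hρ ℓ)
      have h4 : 0 ≤ ∏ ℓ ∈ (δ.erase ℓs).erase ℓ', rhoC ρ ℓ ℓ :=
        Finset.prod_nonneg fun ℓ _ => rhoC_nonneg ρ hρ.2.1 ℓ ℓ
      have h5 : 0 ≤ rhoC ρ ℓ' ℓ' := rhoC_nonneg ρ hρ.2.1 ℓ' ℓ'
      have h6 : 0 ≤ rhoC ρ ℓs ℓs := rhoC_nonneg ρ hρ.2.1 ℓs ℓs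
      calc rhoC ρ ℓs ℓs * (rhoC ρ ℓ' ℓ' * ∏ ℓ ∈ (δ.erase ℓs).erase ℓ', rhoC ρ ℓ ℓ)
          ≤ rhoC ρ ℓs ℓs * (rhoC ρ ℓ' ℓ' * 1) := by
            refine mul_le_mul_of_nonneg_left (mul_le_mul_of_nonneg_left h3 h5) h6
        _ = rhoC ρ ℓs ℓs * rhoC ρ ℓ' ℓ' := by ring
        _ ≤ η * (1 - ρ J') := by
            rw [hKη]
            have h7 : 0 ≤ (1:ℝ) - ρ J' := by
              have := sum_rho_le_one hρ {J'}
              simp at this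
              linarith
            exact mul_le_mul (le_refl η) hbound h5 (le_of_lt hη0)
    calc Pmat ρ δ δ ≤ η * (1 - ρ J') := key
      _ < η * 1 := by
          refine mul_lt_mul_of_pos_left ?_ hη0
          linarith
      _ = η := mul_one η
  · obtain ⟨J, hJ, hJK, hJℓs⟩ := hJc hℓsK
    have hgap := rhoC_gap hρ hKsub hJ hJK hJℓs
    rw [hKη] at hgap
    have : rhoC ρ ℓs ℓs < η := by linarith
    refine lt_of_le_of_lt (hprod_le ℓs hℓsδ (rhoC ρ ℓs ℓs) (le_refl _)
      (rhoC_nonneg ρ hρ.2.1 ℓs ℓs)) this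

end AuxProof6
section AuxProof7
variable {I : Type u} [Fintype I] [DecidableEq I]

lemma summable_phi {ρ : Finset I → ℝ} {η : ℝ} (hρ : IsProbVec ρ)
    (hη : IsGreatest (etaSet ρ) η) {δ : Finset (Finset I)} (hδ : IsPartitionF δ) :
    Summable (fun j : ℕ => (η ^ j)⁻¹ * hitE ρ η δ j) := by
  classical
  have hη0 : 0 < η := eta_pos hρ hη
  have hη1 : η < 1 := eta_lt_one hρ hη
  -- the set of relevant states
  set s : Finset (Finset (Finset I)) := univ.filter
    (fun x : Finset (Finset I) => IsPartitionF x ∧ ReachE ρ η x ∧ x ∉ Efin ρ η) with hs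
  set t : Finset ℝ := insert (0 : ℝ) (s.image (fun x => Pmat ρ x x)) with ht
  have htne : t.Nonempty := ⟨0, Finset.mem_insert_self 0 _⟩
  set β : ℝ := t.max' htne with hβ
  have hβ0 : 0 ≤ β := Finset.le_max' t 0 (Finset.mem_insert_self 0 _)
  have hβη : β < η := by
    have := Finset.max'_mem t htne
    rw [← hβ] at this
    rcases Finset.mem_insert.mp this with h | h
    · rw [h]; exact hη0
    · obtain ⟨x, hx, hxe⟩ := Finset.mem_image.mp h
      have hxf := Finset.mem_filter.mp hx
      rw [← hxe]
      exact selfloop_lt_eta hρ hη hxf.2.2.1 hxf.2.1 hxf.2.2.2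
  have hβle : ∀ x : Finset (Finset I), IsPartitionF x → ReachE ρ η x → x ∉ Efin ρ η →
      Pmat ρ x x ≤ β := by
    intro x h1 h2 h3
    refine Finset.le_max' t _ (Finset.mem_insert_of_mem (Finset.mem_image.mpr
      ⟨x, Finset.mem_filter.mpr ⟨Finset.mem_univ _, h1, h2, h3⟩, rfl⟩))
  set N : ℝ := (Fintype.card (Finset (Finset I)) : ℝ) with hN
  have hN0 : 0 ≤ N := Nat.cast_nonneg _
  set c : ℝ := max 1 ((N + 1) / (η - β)) with hc
  have hc1 : 1 ≤ c := le_max_left _ _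
  have hc0 : 0 < c := lt_of_lt_of_le one_pos hc1
  have hcb : N + 1 ≤ (η - β) * c := by
    have h1 : (N + 1) / (η - β) ≤ c := le_max_right _ _
    have h2 : 0 < η - β := by linarith
    calc N + 1 = (η - β) * ((N + 1) / (η - β)) := by field_simp
      _ ≤ (η - β) * c := by exact mul_le_mul_of_nonneg_left h1 (le_of_lt h2)
  set g : Finset (Finset I) → ℝ := fun x =>
    if ReachE ρ η x then c ^ (Fintype.card I - x.card) else 0 with hg
  have hg0 : ∀ x, 0 ≤ g x := by
    intro x
    rw [hg]
    dsimp only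
    split
    · exact le_of_lt (pow_pos hc0 _)
    · exact le_refl 0
  -- key supersolution inequality
  have key : ∀ x : Finset (Finset I), IsPartitionF x → ReachE ρ η x → x ∉ Efin ρ η →
      ∑ y : Finset (Finset I), Pmat ρ x y * g y ≤ η * g x := by
    intro x hx hRx hEx
    have hgx : g x = c ^ (Fintype.card I - x.card) := if_pos hRx
    have hsplit : ∑ y : Finset (Finset I), Pmat ρ x y * g y =
        Pmat ρ x x * g x + ∑ y ∈ univ.erase x, Pmat ρ x y * g y := by
      rw [← Finset.sum_erase_add univ _ (Finset.mem_univ x)]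
      ring
    rw [hsplit]
    have hterm1 : Pmat ρ x x * c ^ (Fintype.card I - x.card) ≤
        β * c ^ (Fintype.card I - x.card) :=
      mul_le_mul_of_nonneg_right (hβle x hx hRx hEx) (le_of_lt (pow_pos hc0 _))
    by_cases hcard : x.card < Fintype.card I
    · -- there might be strict successors
      have hm1 : 1 ≤ Fintype.card I - x.card := by omega
      have hterm2 : ∀ y ∈ univ.erase x, Pmat ρ x y * g y ≤
          c ^ (Fintype.card I - x.card - 1) := by
        intro y hy
        have hyne : y ≠ x := (Finset.mem_erase.mp hy).1
        by_cases hP : Pmat ρ x y = 0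
        · rw [hP, zero_mul]
          exact le_of_lt (pow_pos hc0 _)
        · have hstep := stepRel_of_Pmat_ne hP
          have hy' : IsPartitionF y := stepRel_partition hx hstep
          have hylt : x.card < y.card := stepRel_card_lt hx hstep hyne
          have hgyle : g y ≤ c ^ (Fintype.card I - x.card - 1) := by
            rw [hg]
            dsimp only
            split
            · refine pow_le_pow_right₀ hc1 ?_
              omega
            · exact le_of_lt (pow_pos hc0 _)
          calc Pmat ρ x y * g y ≤ 1 * (c ^ (Fintype.card I - x.card - 1)) := by
                refine mul_le_mul (Pmat_le_one hρ x y) hgyle (hg0 y) zero_le_one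
            _ = c ^ (Fintype.card I - x.card - 1) := one_mul _
      have hsum2 : ∑ y ∈ univ.erase x, Pmat ρ x y * g y ≤
          N * c ^ (Fintype.card I - x.card - 1) := by
        have := Finset.sum_le_card_nsmul (univ.erase x) (fun y => Pmat ρ x y * g y)
          (c ^ (Fintype.card I - x.card - 1)) hterm2
        rw [nsmul_eq_mul] at this
        refine le_trans this ?_
        refine mul_le_mul_of_nonneg_right ?_ (le_of_lt (pow_pos hc0 _))
        rw [hN]
        exact_mod_cast Finset.card_le_card (Finset.subset_univ _) |>.trans (le_of_eq (Finset.card_univ))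
      rw [hgx]
      have hpowsucc : c ^ (Fintype.card I - x.card) =
          c * c ^ (Fintype.card I - x.card - 1) := by
        rw [← pow_succ']
        congr 1
        omega
      have hpow0 : 0 ≤ c ^ (Fintype.card I - x.card - 1) := le_of_lt (pow_pos hc0 _)
      have hfinal : β * c ^ (Fintype.card I - x.card) +
          N * c ^ (Fintype.card I - x.card - 1) ≤ η * c ^ (Fintype.card I - x.card) := by
        rw [hpowsucc]
        have h8 : (N + 1) * c ^ (Fintype.card I - x.card - 1) ≤
            ((η - β) * c) * c ^ (Fintype.card I - x.card - 1) :=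
          mul_le_mul_of_nonneg_right hcb hpow0
        nlinarith [hpow0]
      calc Pmat ρ x x * (c ^ (Fintype.card I - x.card)) + ∑ y ∈ univ.erase x, Pmat ρ x y * g y
          ≤ β * c ^ (Fintype.card I - x.card) + N * c ^ (Fintype.card I - x.card - 1) :=
            add_le_add hterm1 hsum2
        _ ≤ η * c ^ (Fintype.card I - x.card) := hfinal
    · -- no strict successors at all
      have hxcard : x.card = Fintype.card I := le_antisymm (partition_card_le hx) (by omega)
      have hzero : ∑ y ∈ univ.erase x, Pmat ρ x y * g y = 0 := by
        refine Finset.sum_eq_zero fun y hy => ?_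
        have hyne : y ≠ x := (Finset.mem_erase.mp hy).1
        by_cases hP : Pmat ρ x y = 0
        · rw [hP, zero_mul]
        · exfalso
          have hstep := stepRel_of_Pmat_ne hP
          have hy' : IsPartitionF y := stepRel_partition hx hstep
          have hylt : x.card < y.card := stepRel_card_lt hx hstep hyne
          have := partition_card_le hy'
          omega
      rw [hzero, add_zero, hgx]
      exact le_trans hterm1
        (mul_le_mul_of_nonneg_right (le_of_lt hβη) (le_of_lt (pow_pos hc0 _)))
  -- partial sums are bounded by g
  have main : ∀ n : ℕ, ∀ x : Finset (Finset I), IsPartitionF x →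
      ∑ j ∈ Finset.range n, (η ^ j)⁻¹ * hitE ρ η x j ≤ g x := by
    intro n
    induction n with
    | zero => intro x hx; simp [hg0 x]
    | succ n ih =>
      intro x hx
      rw [Finset.sum_range_succ']
      by_cases hEx : x ∈ Efin ρ η
      · have h1 : ∀ j ∈ Finset.range n, (η ^ (j+1))⁻¹ * hitE ρ η x (j+1) = 0 := by
          intro j _
          rw [hitE_succ_of_mem hEx, mul_zero]
        rw [Finset.sum_congr rfl h1, Finset.sum_const_zero, zero_add]
        rw [hitE_zero, if_pos hEx]
        simp only [pow_zero, inv_one, mul_one]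
        have : g x = c ^ (Fintype.card I - x.card) := if_pos (ReachE.mem hEx)
        rw [this]
        exact one_le_pow₀ hc1
      · rw [hitE_zero, if_neg hEx, mul_zero, add_zero]
        by_cases hRx : ReachE ρ η x
        · have h1 : ∀ j ∈ Finset.range n, (η ^ (j+1))⁻¹ * hitE ρ η x (j+1) =
              ∑ y : Finset (Finset I), Pmat ρ x y * (η⁻¹ * ((η ^ j)⁻¹ * hitE ρ η y j)) := by
            intro j _
            rw [hitE_succ hEx, Finset.mul_sum]
            refine Finset.sum_congr rfl fun y _ => ?_
            rw [pow_succ, mul_inv]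
            ring
          rw [Finset.sum_congr rfl h1, Finset.sum_comm]
          have h2 : ∀ y : Finset (Finset I),
              ∑ j ∈ Finset.range n, Pmat ρ x y * (η⁻¹ * ((η ^ j)⁻¹ * hitE ρ η y j)) =
              η⁻¹ * (Pmat ρ x y * ∑ j ∈ Finset.range n, (η ^ j)⁻¹ * hitE ρ η y j) := by
            intro y
            rw [Finset.mul_sum, Finset.mul_sum]
            exact Finset.sum_congr rfl fun j _ => by ring
          rw [Finset.sum_congr rfl (fun y _ => h2 y)]
          rw [← Finset.mul_sum]
          have h3 : ∑ y : Finset (Finset I),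
              Pmat ρ x y * ∑ j ∈ Finset.range n, (η ^ j)⁻¹ * hitE ρ η y j ≤
              ∑ y : Finset (Finset I), Pmat ρ x y * g y := by
            refine Finset.sum_le_sum fun y _ => ?_
            by_cases hP : Pmat ρ x y = 0
            · rw [hP, zero_mul, zero_mul]
            · have hy' : IsPartitionF y := stepRel_partition hx (stepRel_of_Pmat_ne hP)
              exact mul_le_mul_of_nonneg_left (ih y hy') (Pmat_nonneg hρ x y)
          calc η⁻¹ * ∑ y : Finset (Finset I),
                Pmat ρ x y * ∑ j ∈ Finset.range n, (η ^ j)⁻¹ * hitE ρ η y j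
              ≤ η⁻¹ * ∑ y : Finset (Finset I), Pmat ρ x y * g y := by
                refine mul_le_mul_of_nonneg_left h3 (le_of_lt (inv_pos.mpr hη0))
            _ ≤ η⁻¹ * (η * g x) := by
                refine mul_le_mul_of_nonneg_left (key x hx hRx hEx)
                  (le_of_lt (inv_pos.mpr hη0))
            _ = g x := by field_simp
        · have h1 : ∀ j ∈ Finset.range n, (η ^ (j+1))⁻¹ * hitE ρ η x (j+1) = 0 := by
            intro j _
            rw [hitE_eq_zero_of_not_reach hRx, mul_zero]
          rw [Finset.sum_congr rfl h1, Finset.sum_const_zero]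
          exact hg0 x
  -- conclude
  refine summable_of_sum_range_le (c := g δ) ?_ ?_
  · intro j
    exact mul_nonneg (le_of_lt (inv_pos.mpr (pow_pos hη0 j))) (hitE_nonneg hρ η δ j)
  · intro n
    exact main n δ hδ

end AuxProof7
section AuxProof8
variable {I : Type u} [Fintype I] [DecidableEq I]

lemma univ_nonempty_of_prob {ρ : Finset I → ℝ} (hρ : IsProbVec ρ) :
    (univ : Finset I).Nonempty := by
  by_contra h
  rw [Finset.not_nonempty_iff_eq_empty] at h
  have hall : ∀ J : Finset I, J = ∅ := by
    intro J
    apply Finset.eq_empty_of_forall_notMem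
    intro x hx
    have : x ∈ (univ : Finset I) := Finset.mem_univ x
    rw [h] at this
    exact absurd this (Finset.notMem_empty x)
  have h2 : ∑ J : Finset I, ρ J = 0 :=
    Finset.sum_eq_zero fun J _ => by rw [hall J]; exact hρ.1
  rw [hρ.2.2] at h2
  exact absurd h2 one_ne_zero

lemma isTree_leaves {ρ : Finset I → ℝ} (hρ : IsProbVec ρ) :
    ∀ {n : ℕ} {T : Finset (Fin (n + 1) → Finset I)}, IsTree ρ n T →
    (∀ b ∈ T, (leafOf b).Nonempty) ∧
    (∀ b₁ ∈ T, ∀ b₂ ∈ T, b₁ ≠ b₂ → leafOf b₁ ∩ leafOf b₂ = ∅) ∧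
    T.biUnion (fun b => leafOf b) = univ := by
  intro n T hT
  induction hT with
  | zero =>
    refine ⟨?_, ?_, ?_⟩
    · intro b hb
      rw [Finset.mem_singleton] at hb
      subst hb
      exact univ_nonempty_of_prob hρ
    · intro b₁ h₁ b₂ h₂ hne
      rw [Finset.mem_singleton] at h₁ h₂
      exact absurd (h₁.trans h₂.symm) hne
    · rw [Finset.singleton_biUnion]
      rfl
  | @succ n T ext hT hext ih =>
    obtain ⟨ihne, ihdisj, ihcov⟩ := ih
    have hchild : ∀ b ∈ T, ∀ b' ∈ ext b, leafOf b' ⊆ leafOf b ∧ (leafOf b').Nonempty := by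
      intro b hb b' hb'
      rcases hext b hb with ⟨-, h⟩ | ⟨-, J, hJ, hJu, hne1, hne2, h⟩
      · rw [h, Finset.mem_singleton] at hb'
        subst hb'
        rw [leafOf_snoc]
        exact ⟨Finset.Subset.refl _, ihne b hb⟩
      · rw [h] at hb'
        rcases Finset.mem_insert.mp hb' with rfl | hb'
        · rw [leafOf_snoc]
          exact ⟨Finset.inter_subset_left, hne1⟩
        · rw [Finset.mem_singleton] at hb'
          subst hb'
          rw [leafOf_snoc]
          exact ⟨Finset.sdiff_subset, hne2⟩
    refine ⟨?_, ?_, ?_⟩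
    · intro b' hb'
      obtain ⟨b, hb, hbe⟩ := Finset.mem_biUnion.mp hb'
      exact (hchild b hb b' hbe).2
    · intro b₁' h₁' b₂' h₂' hne'
      obtain ⟨b₁, hb₁, he₁⟩ := Finset.mem_biUnion.mp h₁'
      obtain ⟨b₂, hb₂, he₂⟩ := Finset.mem_biUnion.mp h₂'
      by_cases hbb : b₁ = b₂
      · subst hbb
        rcases hext b₁ hb₁ with ⟨-, h⟩ | ⟨-, J, hJ, hJu, hne1, hne2, h⟩
        · rw [h, Finset.mem_singleton] at he₁ he₂
          exact absurd (he₁.trans he₂.symm) hne'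
        · rw [h] at he₁ he₂
          have hd : (leafOf b₁ ∩ J) ∩ (leafOf b₁ \ J) = ∅ := by
            ext x
            simp only [Finset.mem_inter, Finset.mem_sdiff, Finset.notMem_empty, iff_false]
            tauto
          rcases Finset.mem_insert.mp he₁ with rfl | he₁ <;>
            rcases Finset.mem_insert.mp he₂ with rfl | he₂
          · exact absurd rfl hne'
          · rw [Finset.mem_singleton] at he₂
            subst he₂
            rw [leafOf_snoc, leafOf_snoc]
            exact hd
          · rw [Finset.mem_singleton] at he₁
            subst he₁
            rw [leafOf_snoc, leafOf_snoc, Finset.inter_comm]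
            exact hd
          · rw [Finset.mem_singleton] at he₁ he₂
            subst he₁; subst he₂
            exact absurd rfl hne'
      · have hd := ihdisj b₁ hb₁ b₂ hb₂ hbb
        apply Finset.eq_empty_of_forall_notMem
        intro x hx
        have hx1 := (hchild b₁ hb₁ b₁' he₁).1 (Finset.mem_inter.mp hx).1
        have hx2 := (hchild b₂ hb₂ b₂' he₂).1 (Finset.mem_inter.mp hx).2
        have : x ∈ leafOf b₁ ∩ leafOf b₂ := Finset.mem_inter.mpr ⟨hx1, hx2⟩
        rw [hd] at this
        exact absurd this (Finset.notMem_empty x)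
    · rw [Finset.biUnion_biUnion]
      rw [← ihcov]
      refine Finset.biUnion_congr rfl ?_
      intro b hb
      rcases hext b hb with ⟨-, h⟩ | ⟨-, J, hJ, hJu, hne1, hne2, h⟩
      · rw [h, Finset.singleton_biUnion, leafOf_snoc]
      · rw [h, Finset.biUnion_insert, Finset.singleton_biUnion, leafOf_snoc, leafOf_snoc]
        ext x
        simp only [Finset.mem_union, Finset.mem_inter, Finset.mem_sdiff]
        by_cases hxJ : x ∈ J <;> tauto

lemma leafPartAny_partition {ρ : Finset I → ℝ} (hρ : IsProbVec ρ)
    {δ : Finset (Finset I)} (h : LeafPartAny ρ δ) : IsPartitionF δ := by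
  obtain ⟨n, T, hT, rfl⟩ := h
  obtain ⟨hne, hdisj, hcov⟩ := isTree_leaves hρ hT
  refine ⟨?_, ?_, ?_⟩
  · intro L hL
    obtain ⟨b, hb, rfl⟩ := Finset.mem_image.mp hL
    exact hne b hb
  · intro L₁ h₁ L₂ h₂ hneq
    obtain ⟨b₁, hb₁, rfl⟩ := Finset.mem_image.mp h₁
    obtain ⟨b₂, hb₂, rfl⟩ := Finset.mem_image.mp h₂
    exact hdisj b₁ hb₁ b₂ hb₂ (fun h => hneq (h ▸ rfl))
  · rw [← hcov]
    ext x
    simp only [Finset.mem_biUnion, Finset.mem_image, id]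
    constructor
    · rintro ⟨L, ⟨b, hb, rfl⟩, hx⟩
      exact ⟨b, hb, hx⟩
    · rintro ⟨b, hb, hx⟩
      exact ⟨leafOf b, ⟨b, hb, rfl⟩, hx⟩

end AuxProof8
section AuxProof9
variable {I : Type u} [Fintype I] [DecidableEq I]

lemma phiVec_of_mem_Efin {ρ : Finset I → ℝ} {η : ℝ} {δ0 : Finset (Finset I)}
    (h : δ0 ∈ Efin ρ η) : phiVec ρ η δ0 = 1 := by
  rw [phiVec_eq]
  have he : (fun j : ℕ => (η ^ j)⁻¹ * hitE ρ η δ0 j) =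
      fun j => if j = 0 then (1 : ℝ) else 0 := by
    funext j
    cases j with
    | zero => rw [hitE_zero, if_pos h]; simp
    | succ j => rw [hitE_succ_of_mem h]; simp
  rw [he]
  exact tsum_ite_eq 0 1

lemma Pmat_self_of_DrhoK {ρ : Finset I → ℝ} (hρ : IsProbVec ρ) {η : ℝ} {K : Finset I}
    (hKY : inY ρ K) (hKη : rhoC ρ K K = η) :
    Pmat ρ (DrhoK ρ K) (DrhoK ρ K) = η := by
  rw [Pmat_self]
  rw [← Finset.mul_prod_erase _ _ (K_mem_DrhoK ρ K), hKη]
  have hone : ∀ L ∈ (DrhoK ρ K).erase K, rhoC ρ L L = 1 := by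
    intro L hL
    obtain ⟨hLne, hLmem⟩ := Finset.mem_erase.mp hL
    rcases mem_DrhoK_elim hLmem with rfl | ⟨hatom, -⟩
    · exact absurd rfl hLne
    · exact isAtomD_rhoC hρ hatom
  rw [Finset.prod_congr rfl hone, Finset.prod_const_one, mul_one]

lemma E_step_classify {ρ : Finset I → ℝ} {K : Finset I} {δ' : Finset (Finset I)}
    (hstep : stepRel ρ (DrhoK ρ K) δ') (hne : δ' ≠ DrhoK ρ K) :
    ∃ J, 0 < ρ J ∧ (K ∩ J).Nonempty ∧ (K \ J).Nonempty ∧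
      ∀ x ∈ δ', isAtomD ρ x ∨ x = K ∩ J ∨ x = K \ J := by
  obtain ⟨c, hc, hδ'⟩ := hstep
  have hkeepatom : ∀ L ∈ DrhoK ρ K, L ≠ K → c L = {L} := by
    intro L hL hLK
    rcases mem_DrhoK_elim hL with rfl | ⟨hatom, -⟩
    · exact absurd rfl hLK
    · rcases hc L hL with h | ⟨J, hJ, hJu, h1, h2, h⟩
      · exact h
      · exact absurd ⟨h1, h2⟩ (atom_not_splittable hatom hJ)
  rcases hc K (K_mem_DrhoK ρ K) with h | ⟨J, hJ, hJu, h1, h2, h⟩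
  · exfalso
    apply hne
    rw [hδ']
    apply Finset.Subset.antisymm
    · intro x hx
      obtain ⟨L, hL, hxc⟩ := Finset.mem_biUnion.mp hx
      by_cases hLK : L = K
      · subst hLK; rw [h, Finset.mem_singleton] at hxc; subst hxc; exact hL
      · rw [hkeepatom L hL hLK, Finset.mem_singleton] at hxc; subst hxc; exact hL
    · intro L hL
      by_cases hLK : L = K
      · subst hLK
        exact Finset.mem_biUnion.mpr ⟨L, hL, by rw [h]; exact Finset.mem_singleton_self L⟩
      · exact Finset.mem_biUnion.mpr ⟨L, hL,
          by rw [hkeepatom L hL hLK]; exact Finset.mem_singleton_self L⟩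
  · refine ⟨J, hJ, h1, h2, ?_⟩
    intro x hx
    rw [hδ'] at hx
    obtain ⟨L, hL, hxc⟩ := Finset.mem_biUnion.mp hx
    by_cases hLK : L = K
    · subst hLK
      rw [h] at hxc
      rcases Finset.mem_insert.mp hxc with rfl | hxc
      · right; left; rfl
      · rw [Finset.mem_singleton] at hxc; subst hxc; right; right; rfl
    · rw [hkeepatom L hL hLK, Finset.mem_singleton] at hxc
      subst hxc
      rcases mem_DrhoK_elim hL with rfl | ⟨hatom, -⟩
      · exact absurd rfl hLK
      · exact Or.inl hatom

lemma phiVec_succ_zero {ρ : Finset I → ℝ} {η : ℝ} (hρ : IsProbVec ρ)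
    (hη : IsGreatest (etaSet ρ) η) {K : Finset I} {δ' : Finset (Finset I)}
    (hKY : inY ρ K) (hKη : rhoC ρ K K = η) (hδ'p : IsPartitionF δ')
    (hJex : ∃ J, 0 < ρ J ∧ (K ∩ J).Nonempty ∧ (K \ J).Nonempty ∧
      ∀ x ∈ δ', isAtomD ρ x ∨ x = K ∩ J ∨ x = K \ J) :
    phiVec ρ η δ' = 0 := by
  have hη0 : 0 < η := eta_pos hρ hη
  have hη1 : η < 1 := eta_lt_one hρ hη
  obtain ⟨J, hJ, h1, h2, hcls⟩ := hJex
  have hJKbad : ¬(J ∩ K = K ∨ J ∩ K = ∅) := by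
    rintro (h | h)
    · obtain ⟨y, hy⟩ := h2
      rw [Finset.mem_sdiff] at hy
      have : K ⊆ J := by rw [← h]; exact Finset.inter_subset_left
      exact hy.2 (this hy.1)
    · obtain ⟨y, hy⟩ := h1
      have : y ∈ J ∩ K := Finset.mem_inter.mpr
        ⟨(Finset.mem_inter.mp hy).2, (Finset.mem_inter.mp hy).1⟩
      rw [h] at this
      exact absurd this (Finset.notMem_empty y)
  have hpiece_gap : ∀ M : Finset I, M ⊆ K → (J ∩ M = M ∨ J ∩ M = ∅) →
      rhoC ρ M M = η → False := by
    intro M hMK hJM hMη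
    have := rhoC_gap hρ hMK hJ hJM hJKbad
    rw [hKη, hMη] at this
    linarith
  have hNR : ¬ ReachE ρ η δ' := by
    intro hR
    by_cases hE' : δ' ∈ Efin ρ η
    · obtain ⟨K'', hK''Y, hK''η, rfl⟩ := mem_Efin.mp hE'
      rcases hcls K'' (K_mem_DrhoK ρ K'') with hatom | hP | hP
      · rw [isAtomD_rhoC hρ hatom] at hK''η
        exact absurd hK''η.symm (ne_of_lt hη1)
      · refine hpiece_gap K'' (hP ▸ Finset.inter_subset_left) ?_ hK''η
        left
        rw [hP]
        ext y
        simp only [Finset.mem_inter]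
        tauto
      · refine hpiece_gap K'' (hP ▸ Finset.sdiff_subset) ?_ hK''η
        right
        rw [hP]
        ext y
        simp only [Finset.mem_inter, Finset.mem_sdiff, Finset.notMem_empty, iff_false]
        tauto
    · obtain ⟨Kt, ℓs, hKtY, hKtη, hℓs, hKtsub, -, -⟩ := reach_struct hρ hR hδ'p
      rcases hcls ℓs hℓs with hatom | hP | hP
      · have h3 := atom_inter hatom hKtY
        have h4 : ℓs ∩ Kt = Kt := Finset.inter_eq_right.mpr hKtsub
        rw [h4] at h3
        rcases h3 with h3 | h3
        · rw [h3, isAtomD_rhoC hρ hatom] at hKtη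
          exact absurd hKtη.symm (ne_of_lt hη1)
        · obtain ⟨y, hy⟩ := inY_nonempty hρ hKtY
          rw [h3] at hy
          exact absurd hy (Finset.notMem_empty y)
      · subst hP
        refine hpiece_gap Kt (hKtsub.trans Finset.inter_subset_left) ?_ hKtη
        left
        have : Kt ⊆ J := hKtsub.trans Finset.inter_subset_right
        exact Finset.inter_eq_right.mpr this
      · subst hP
        refine hpiece_gap Kt (hKtsub.trans Finset.sdiff_subset) ?_ hKtη
        right
        apply Finset.eq_empty_of_forall_notMem
        intro y hy
        have hyKt := (Finset.mem_inter.mp hy).2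
        have := hKtsub hyKt
        exact (Finset.mem_sdiff.mp this).2 (Finset.mem_inter.mp hy).1
  rw [phiVec_eq]
  have hz : ∀ j : ℕ, (η ^ j)⁻¹ * hitE ρ η δ' j = 0 := fun j => by
    rw [hitE_eq_zero_of_not_reach hNR, mul_zero]
  rw [tsum_congr hz, tsum_zero]

end AuxProof9
/-- `φ_δ = E_δ(η^{-ζ^ℰ}, ζ^ℰ < ∞)` is a right eigenvector of the
restriction `P*` of `P` to the non-absorbing states, with eigenvalue `η`. -/
theorem phiVec_right_eigenvector {I : Type u} [Fintype I] [DecidableEq I]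
    (ρ : Finset I → ℝ) (hρ : IsProbVec ρ) (hI : ρ Finset.univ < 1) (η : ℝ)
    (hη : IsGreatest {x : ℝ | ∃ K : Finset I, inY ρ K ∧ ¬ isAtomD ρ K ∧ x = rhoC ρ K K} η) :
    ∀ δ : Finset (Finset I), LeafPartAny ρ δ → δ ≠ DrhoP ρ →
      ∑ δ' ∈ univ.filter (fun δ' : Finset (Finset I) => δ' ≠ DrhoP ρ),
        Pmat ρ δ δ' * phiVec ρ η δ' = η * phiVec ρ η δ := by
  have hη' : IsGreatest (etaSet ρ) η := hη
  have hη0 : 0 < η := eta_pos hρ hη'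
  have hη1 : η < 1 := eta_lt_one hρ hη'
  intro δ0 hLP hnD
  have hδ0p : IsPartitionF δ0 := leafPartAny_partition hρ hLP
  by_cases hE : δ0 ∈ Efin ρ η
  · -- δ0 is a state of ∂(𝒯)^ℰ
    obtain ⟨K, hKY, hKη, hδ0K⟩ := mem_Efin.mp hE
    have hφ1 : phiVec ρ η δ0 = 1 := phiVec_of_mem_Efin hE
    have hzero : ∀ δ' ∈ univ.filter (fun δ' : Finset (Finset I) => δ' ≠ DrhoP ρ),
        δ' ≠ δ0 → Pmat ρ δ0 δ' * phiVec ρ η δ' = 0 := by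
      intro δ' hδ'mem hδ'ne
      by_cases hP : Pmat ρ δ0 δ' = 0
      · rw [hP, zero_mul]
      · have hstep : stepRel ρ (DrhoK ρ K) δ' := hδ0K ▸ stepRel_of_Pmat_ne hP
        have hcls := E_step_classify hstep (by rw [← hδ0K]; exact hδ'ne)
        have hδ'p : IsPartitionF δ' := stepRel_partition hδ0p (stepRel_of_Pmat_ne hP)
        rw [phiVec_succ_zero hρ hη' hKY hKη hδ'p hcls, mul_zero]
    rw [Finset.sum_eq_single_of_mem δ0
      (Finset.mem_filter.mpr ⟨Finset.mem_univ _, hnD⟩) hzero]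
    rw [hφ1, mul_one, mul_one, hδ0K]
    exact Pmat_self_of_DrhoK hρ hKY hKη
  · -- δ0 is not a state of ∂(𝒯)^ℰ
    have hsumm : ∀ δ' : Finset (Finset I), IsPartitionF δ' →
        Summable (fun j : ℕ => (η ^ j)⁻¹ * hitE ρ η δ' j) :=
      fun δ' h => summable_phi hρ hη' h
    have key : ∀ j : ℕ,
        ∑ δ' ∈ univ.filter (fun δ' : Finset (Finset I) => δ' ≠ DrhoP ρ),
          Pmat ρ δ0 δ' * ((η ^ j)⁻¹ * hitE ρ η δ' j)
        = (η ^ j)⁻¹ * hitE ρ η δ0 (j + 1) := by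
      intro j
      rw [Finset.filter_ne']
      rw [Finset.sum_erase _ (by rw [hitE_DrhoP hρ hη1]; ring)]
      rw [hitE_succ hE, Finset.mul_sum]
      exact Finset.sum_congr rfl fun δ' _ => by ring
    calc ∑ δ' ∈ univ.filter (fun δ' : Finset (Finset I) => δ' ≠ DrhoP ρ),
          Pmat ρ δ0 δ' * phiVec ρ η δ'
        = ∑ δ' ∈ univ.filter (fun δ' : Finset (Finset I) => δ' ≠ DrhoP ρ),
            ∑' j : ℕ, Pmat ρ δ0 δ' * ((η ^ j)⁻¹ * hitE ρ η δ' j) := by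
          refine Finset.sum_congr rfl fun δ' _ => ?_
          rw [phiVec_eq, ← tsum_mul_left]
      _ = ∑' j : ℕ, ∑ δ' ∈ univ.filter (fun δ' : Finset (Finset I) => δ' ≠ DrhoP ρ),
            Pmat ρ δ0 δ' * ((η ^ j)⁻¹ * hitE ρ η δ' j) := by
          refine (Summable.tsum_finsetSum ?_).symm
          intro δ' _
          by_cases hP : Pmat ρ δ0 δ' = 0
          · simpa [hP] using summable_zero
          · exact (hsumm δ' (stepRel_partition hδ0p (stepRel_of_Pmat_ne hP))).mul_left _
      _ = ∑' j : ℕ, (η ^ j)⁻¹ * hitE ρ η δ0 (j + 1) := tsum_congr key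
      _ = η * phiVec ρ η δ0 := by
          have hφ := Summable.tsum_eq_zero_add (hsumm δ0 hδ0p)
          rw [phiVec_eq, hφ]
          rw [hitE_zero, if_neg hE, mul_zero, zero_add]
          rw [← tsum_mul_left]
          refine tsum_congr fun j => ?_
          have hne0 : η ≠ 0 := ne_of_gt hη0
          have hpne : (η : ℝ) ^ j ≠ 0 := pow_ne_zero j hne0
          rw [pow_succ, mul_inv]
          field_simp
end
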